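/- arXiv:0808.2822 — 2 statements merged into one kernel-verified Lean document; each statement's English description precedes it below -/
import Mathlib

section
/- For every n ≥ 1, the area generating polynomial of type B Dyck paths satisfies the recurrence Cat_{B_n}(q) = Cat_n(q) + Σ_{k=0}^{n−1} q^{2k+1} · Cat_{B_k}(q) · Cat_{n−k}(q) in ℤ[q], where Cat_m(q) = Σ_{w ∈ D_m} q^{area(w)} is the area generating polynomial over Dyck paths of length m (with Cat_0(q) = 1), and Cat_{B_m}(q) = Σ_w q^{area(w)} is the sum over all Dyck paths w of type B_m (with Cat_{B_0}(q) = 1). -/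
open scoped Classical

namespace Stmt

/-- Number of north steps (`true`) among the first `k` steps of the path `w`. -/
def countN {m : ℕ} (w : Fin m → Bool) (k : ℕ) : ℕ :=
  (Finset.univ.filter (fun t : Fin m => (t : ℕ) < k ∧ w t = true)).card

/-- Number of east steps (`false`) among the first `k` steps of the path `w`. -/
def countE {m : ℕ} (w : Fin m → Bool) (k : ℕ) : ℕ :=
  (Finset.univ.filter (fun t : Fin m => (t : ℕ) < k ∧ w t = false)).card

/-- A Dyck path of length `n`: `n` north and `n` east steps, every prefix has
at least as many north as east steps. -/
def IsDyckA (n : ℕ) (w : Fin (2 * n) → Bool) : Prop :=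
  countN w (2 * n) = n ∧ ∀ k : ℕ, countE w k ≤ countN w k

/-- A Dyck path of type `B_n`: `2n` steps, every prefix has at least as many
north as east steps. -/
def IsDyckB (n : ℕ) (w : Fin (2 * n) → Bool) : Prop :=
  ∀ k : ℕ, countE w k ≤ countN w k

/-- The unit cell `[i-1,i] × [j-1,j]` lies below the lattice path `w`:
at some time the path has `x`-coordinate `< i` and `y`-coordinate `≥ j`. -/
def CellBelow {m : ℕ} (w : Fin m → Bool) (i j : ℕ) : Prop :=
  ∃ k : ℕ, countE w k < i ∧ j ≤ countN w k

/-- Area of a (type `A`) Dyck path: number of cells `b_{i,j}` with `i < j`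
lying below the path. -/
noncomputable def areaA {m : ℕ} (w : Fin m → Bool) : ℕ :=
  {p : ℕ × ℕ | 1 ≤ p.1 ∧ p.1 < p.2 ∧ CellBelow w p.1 p.2}.ncard

/-- Area of a type `B_n` Dyck path: number of cells `b_{i,j}` with
`1 ≤ i < j ≤ 2n+1-i` lying below the path. -/
noncomputable def areaB (n : ℕ) (w : Fin (2 * n) → Bool) : ℕ :=
  {p : ℕ × ℕ | 1 ≤ p.1 ∧ p.1 < p.2 ∧ p.2 ≤ 2 * n + 1 - p.1 ∧
    CellBelow w p.1 p.2}.ncard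

/-- Descent set of a path, 1-indexed: positions `i` with `w_i = E`, `w_{i+1} = N`. -/
def pathDes {m : ℕ} (w : Fin m → Bool) : Finset ℕ :=
  (Finset.Ioo 0 m).filter (fun i =>
    ∃ h : i < m, w ⟨i - 1, Nat.lt_of_le_of_lt (Nat.sub_le i 1) h⟩ = false ∧ w ⟨i, h⟩ = true)

def desPath {m : ℕ} (w : Fin m → Bool) : ℕ := (pathDes w).card

/-- Major index of a Dyck path of length `n`: `maj(w) = ∑_{i ∈ Des(w)} (2n - i)`. -/
def majA (n : ℕ) (w : Fin (2 * n) → Bool) : ℕ :=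
  ∑ i ∈ pathDes w, (2 * n - i)

/-- Number of east steps of a path. -/
def negPath {m : ℕ} (w : Fin m → Bool) : ℕ :=
  (Finset.univ.filter (fun t : Fin m => w t = false)).card

/-- Type `B` major index: `maj(w) = 2 ⬝ (neg(w) + ∑_{i ∈ Des(w)} (2n - i))`. -/
def majB (n : ℕ) (w : Fin (2 * n) → Bool) : ℕ :=
  2 * (negPath w + ∑ i ∈ pathDes w, (2 * n - i))

/-- Area generating polynomial of Dyck paths of length `n`. -/
noncomputable def CatA (n : ℕ) : Polynomial ℤ :=
  ∑ w ∈ Finset.univ.filter (fun w : Fin (2 * n) → Bool => IsDyckA n w),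
    Polynomial.X ^ areaA w

/-- Area generating polynomial of Dyck paths of type `B_n`. -/
noncomputable def CatB (n : ℕ) : Polynomial ℤ :=
  ∑ w ∈ Finset.univ.filter (fun w : Fin (2 * n) → Bool => IsDyckB n w),
    Polynomial.X ^ areaB n w



/-! ### Prefix-count API on lists -/



/-! ### Prefix-count API on lists -/

def cN (l : List Bool) (k : ℕ) : ℕ := (l.take k).count true
def cE (l : List Bool) (k : ℕ) : ℕ := (l.take k).count false

lemma count_tf (t : List Bool) : t.count true + t.count false = t.length := by
  induction t with
  | nil => simp
  | cons a t ih => cases a <;> simp [List.count_cons] <;> omega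

lemma cN_add_cE (l : List Bool) (k : ℕ) : cN l k + cE l k = min k l.length := by
  have := count_tf (l.take k)
  simpa [cN, cE] using this

@[simp] lemma cN_zero (l : List Bool) : cN l 0 = 0 := by simp [cN]
@[simp] lemma cE_zero (l : List Bool) : cE l 0 = 0 := by simp [cE]
@[simp] lemma cN_nil (k : ℕ) : cN [] k = 0 := by simp [cN]
@[simp] lemma cE_nil (k : ℕ) : cE [] k = 0 := by simp [cE]

lemma cN_mono (l : List Bool) {k k' : ℕ} (h : k ≤ k') : cN l k ≤ cN l k' := by
  have h1 : l.take k = (l.take k').take k := by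
    rw [List.take_take, min_eq_left h]
  rw [cN, h1]
  exact (List.take_sublist _ _).count_le _

lemma cE_mono (l : List Bool) {k k' : ℕ} (h : k ≤ k') : cE l k ≤ cE l k' := by
  have h1 : l.take k = (l.take k').take k := by
    rw [List.take_take, min_eq_left h]
  rw [cE, h1]
  exact (List.take_sublist _ _).count_le _

lemma cN_of_le (l : List Bool) {k : ℕ} (h : l.length ≤ k) : cN l k = l.count true := by
  rw [cN, List.take_of_length_le h]

lemma cE_of_le (l : List Bool) {k : ℕ} (h : l.length ≤ k) : cE l k = l.count false := by
  rw [cE, List.take_of_length_le h]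

lemma cN_le_count (l : List Bool) (k : ℕ) : cN l k ≤ l.count true :=
  (cN_mono l (Nat.le_max_left k l.length)).trans (le_of_eq (cN_of_le l (le_max_right _ _)))

lemma cN_append (a b : List Bool) (k : ℕ) :
    cN (a ++ b) k = cN a k + cN b (k - a.length) := by
  rw [cN, List.take_append, List.count_append]; rfl

lemma cE_append (a b : List Bool) (k : ℕ) :
    cE (a ++ b) k = cE a k + cE b (k - a.length) := by
  rw [cE, List.take_append, List.count_append]; rfl

lemma cN_cons_succ (x : Bool) (l : List Bool) (k : ℕ) :
    cN (x :: l) (k + 1) = (if x then 1 else 0) + cN l k := by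
  cases x <;> simp [cN, List.count_cons] <;> omega

lemma cE_cons_succ (x : Bool) (l : List Bool) (k : ℕ) :
    cE (x :: l) (k + 1) = (if x then 0 else 1) + cE l k := by
  cases x <;> simp [cE, List.count_cons] <;> omega

lemma cN_succ_cases (l : List Bool) (k : ℕ) :
    cN l (k + 1) = cN l k ∨ (cN l (k + 1) = cN l k + 1 ∧ cE l (k + 1) = cE l k) := by
  rcases le_or_gt l.length k with h | h
  · left; rw [cN_of_le l h, cN_of_le l (h.trans (Nat.le_succ k))]
  · have h1 : l.take (k+1) = l.take k ++ l[k]?.toList := List.take_succ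
    have h2 : l[k]? = some l[k] := List.getElem?_eq_getElem h
    rcases hb : l[k] with _ | _
    · left
      rw [cN, h1, h2, hb, List.count_append]
      simp [cN]
    · right
      constructor
      · rw [cN, h1, h2, hb, List.count_append]; simp [cN]
      · rw [cE, h1, h2, hb, List.count_append]; simp [cE]

/-! ### chunk 2 -/

lemma cN_le_length (l : List Bool) (k : ℕ) : cN l k ≤ l.length := by
  have := cN_add_cE l k; omega

def HalfL (l : List Bool) : Prop := ∀ k, cE l k ≤ cN l k
def StrictL (l : List Bool) : Prop := ∀ k, 1 ≤ k → k ≤ l.length → cE l k < cN l k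

lemma HalfL_of_bounded {l : List Bool} (h : ∀ k ≤ l.length, cE l k ≤ cN l k) : HalfL l := by
  intro k
  rcases le_or_gt k l.length with hk | hk
  · exact h k hk
  · rw [cN_of_le l hk.le, cE_of_le l hk.le]
    have h1 := h l.length le_rfl
    rwa [cN_of_le l le_rfl, cE_of_le l le_rfl] at h1

lemma StrictL.halfL {l : List Bool} (h : StrictL l) : HalfL l := by
  refine HalfL_of_bounded (fun k hk => ?_)
  rcases Nat.eq_zero_or_pos k with rfl | hk1
  · simp
  · exact (h k hk1 hk).le

lemma HalfL.count_le {l : List Bool} (h : HalfL l) : l.count false ≤ l.count true := by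
  have := h l.length
  rwa [cN_of_le l le_rfl, cE_of_le l le_rfl] at this

lemma HalfL.append {x y : List Bool} (hx : HalfL x) (hy : HalfL y) : HalfL (x ++ y) := by
  intro k
  rw [cN_append, cE_append]
  rcases le_or_gt k x.length with hk | hk
  · have : k - x.length = 0 := by omega
    rw [this]; simpa using hx k
  · have h1 : cE x k = x.count false := cE_of_le x hk.le
    have h2 : cN x k = x.count true := cN_of_le x hk.le
    rw [h1, h2]
    exact Nat.add_le_add hx.count_le (hy _)

lemma HalfL.count_true_ge {l : List Bool} (h : HalfL l) : l.length ≤ 2 * l.count true := by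
  have h1 := h.count_le
  have h2 := count_tf l
  omega

/-! ### chunk 3 : cells -/

def cellL (l : List Bool) (i j : ℕ) : Prop := ∃ k, k ≤ l.length ∧ cE l k < i ∧ j ≤ cN l k

lemma cellL_le_count {l : List Bool} {i j : ℕ} (h : cellL l i j) : j ≤ l.count true := by
  obtain ⟨k, _, _, hj⟩ := h
  exact hj.trans (cN_le_count l k)

/-- For a path weakly above the diagonal, the diagonal cell `(i,i)` is below the path
iff the path reaches height `i`. -/
lemma cellL_diag {l : List Bool} (h : HalfL l) {i : ℕ} (hi : 1 ≤ i) :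
    cellL l i i ↔ i ≤ l.count true := by
  constructor
  · exact cellL_le_count
  · intro hcount
    have hex : ∃ k, k ≤ l.length ∧ i ≤ cN l k := ⟨l.length, le_rfl, by rwa [cN_of_le l le_rfl]⟩
    classical
    obtain ⟨k, hk, hik⟩ := hex
    -- take the least k with i ≤ cN l k
    have hP : ∃ k, i ≤ cN l k := ⟨k, hik⟩
    set k0 := Nat.find hP with hk0
    have hspec : i ≤ cN l k0 := Nat.find_spec hP
    have hk0pos : 1 ≤ k0 := by
      rcases Nat.eq_zero_or_pos k0 with h0 | h0
      · exfalso; rw [h0] at hspec; simp at hspec; omega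
      · exact h0
    have hmin : ¬ i ≤ cN l (k0 - 1) := Nat.find_min hP (by omega)
    have hcase := cN_succ_cases l (k0 - 1)
    have hsub : k0 - 1 + 1 = k0 := by omega
    rw [hsub] at hcase
    rcases hcase with hc | ⟨hc1, hc2⟩
    · omega
    · refine ⟨k0, ?_, ?_, hspec⟩
      · by_contra hlen
        push_neg at hlen
        have := cN_of_le l (by omega : l.length ≤ k0 - 1)
        rw [cN_of_le l hlen.le] at hspec
        omega
      · have := h (k0 - 1)
        omega

lemma cellL_append_low {d p : List Bool} {i j : ℕ} (h : i ≤ d.count false) :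
    cellL (d ++ p) i j ↔ cellL d i j := by
  constructor
  · rintro ⟨k, hk, he, hn⟩
    rcases le_or_gt k d.length with hkd | hkd
    · refine ⟨k, hkd, ?_, ?_⟩
      · rw [cE_append] at he
        have : k - d.length = 0 := by omega
        rw [this] at he; simpa using he
      · rw [cN_append] at hn
        have : k - d.length = 0 := by omega
        rw [this] at hn; simpa using hn
    · exfalso
      rw [cE_append, cE_of_le d hkd.le] at he
      omega
  · rintro ⟨k, hk, he, hn⟩
    refine ⟨k, by simp; omega, ?_, ?_⟩
    · rw [cE_append]
      have : k - d.length = 0 := by omega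
      rw [this]; simpa using he
    · rw [cN_append]
      have : k - d.length = 0 := by omega
      rw [this]; simpa using hn

lemma cellL_append_high {d p : List Bool} {i j a : ℕ} (hT : d.count true = a)
    (hF : d.count false = a) (hi : a < i) (hj : a < j) :
    cellL (d ++ p) i j ↔ cellL p (i - a) (j - a) := by
  have hlen : d.length = 2 * a := by have := count_tf d; omega
  constructor
  · rintro ⟨k, hk, he, hn⟩
    rcases le_or_gt k d.length with hkd | hkd
    · exfalso
      rw [cN_append] at hn
      have h0 : k - d.length = 0 := by omega
      rw [h0] at hn
      simp at hn
      have := cN_le_count d k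
      omega
    · refine ⟨k - d.length, ?_, ?_, ?_⟩
      · simp at hk; omega
      · rw [cE_append, cE_of_le d hkd.le, hF] at he; omega
      · rw [cN_append, cN_of_le d hkd.le, hT] at hn; omega
  · rintro ⟨k, hk, he, hn⟩
    refine ⟨d.length + k, by simp; omega, ?_, ?_⟩
    · rw [cE_append]
      have h1 : cE d (d.length + k) = a := by rw [cE_of_le d (by omega), hF]
      have h2 : d.length + k - d.length = k := by omega
      rw [h1, h2]; omega
    · rw [cN_append]
      have h1 : cN d (d.length + k) = a := by rw [cN_of_le d (by omega), hT]
      have h2 : d.length + k - d.length = k := by omega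
      rw [h1, h2]; omega

/-- cells of `true :: s` in terms of cells of `s`. -/
lemma cellL_cons_true {s : List Bool} {i j : ℕ} (hj : 2 ≤ j) :
    cellL (true :: s) i j ↔ cellL s i (j - 1) := by
  constructor
  · rintro ⟨k, hk, he, hn⟩
    rcases Nat.eq_zero_or_pos k with rfl | hkpos
    · simp at hn; omega
    · obtain ⟨k', rfl⟩ : ∃ k', k = k' + 1 := ⟨k - 1, by omega⟩
      rw [cE_cons_succ] at he
      rw [cN_cons_succ] at hn
      simp at he hn
      exact ⟨k', by simp at hk; omega, he, by omega⟩
  · rintro ⟨k, hk, he, hn⟩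
    refine ⟨k + 1, by simp; omega, ?_, ?_⟩
    · rw [cE_cons_succ]; simpa using he
    · rw [cN_cons_succ]; simp; omega

/-- cells of the elevated path `true :: (u ++ [false])` for balanced `u`. -/
lemma cellL_elev {u : List Bool} (hT : u.count true = u.count false)
    {i j : ℕ} (hi : 1 ≤ i) (hij : i < j) :
    cellL (true :: (u ++ [false])) i j ↔ cellL u i (j - 1) := by
  constructor
  · rintro ⟨k, hk, he, hn⟩
    rcases Nat.eq_zero_or_pos k with rfl | hkpos
    · simp at hn; omega
    · obtain ⟨k', rfl⟩ : ∃ k', k = k' + 1 := ⟨k - 1, by omega⟩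
      rw [cE_cons_succ] at he
      rw [cN_cons_succ] at hn
      simp at he hn hk
      rw [cE_append] at he
      rw [cN_append] at hn
      rcases le_or_gt k' u.length with hk' | hk'
      · have h0 : k' - u.length = 0 := by omega
        rw [h0] at he hn
        simp at he hn
        exact ⟨k', hk', he, by omega⟩
      · -- k' = u.length + 1, i.e. the full path; leads to contradiction
        exfalso
        have hk'' : k' = u.length + 1 := by omega
        have he1 : cE u k' = u.count false := cE_of_le u (by omega)
        have hn1 : cN u k' = u.count true := cN_of_le u (by omega)
        have h2 : cE [false] (k' - u.length) = 1 := by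
          have h4 : k' - u.length = 1 := by omega
          rw [h4]
          have hA := cN_add_cE [false] 1
          have hB := cN_le_count [false] 1
          simp at hA hB
          omega
        have h3 : cN [false] (k' - u.length) ≤ 1 := by
          have := cN_le_length [false] (k' - u.length); simpa using this
        have := cN_le_count u k'
        omega
  · rintro ⟨k, hk, he, hn⟩
    refine ⟨k + 1, by simp; omega, ?_, ?_⟩
    · rw [cE_cons_succ]
      simp
      rw [cE_append]
      have : k - u.length = 0 := by omega
      rw [this]; simpa using he
    · rw [cN_cons_succ]
      simp
      rw [cN_append]
      have : k - u.length = 0 := by omega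
      rw [this]; simp; omega

/-! ### chunk 4 : area finsets -/

lemma count_le_length (l : List Bool) : l.count true ≤ l.length := by
  have := count_tf l; omega

noncomputable def cellsB (m : ℕ) (l : List Bool) : Finset (ℕ × ℕ) :=
  (Finset.range (m+2) ×ˢ Finset.range (m+2)).filter
    (fun q => 1 ≤ q.1 ∧ q.1 < q.2 ∧ q.2 ≤ m + 1 - q.1 ∧ cellL l q.1 q.2)

noncomputable def areaBL (m : ℕ) (l : List Bool) : ℕ := (cellsB m l).card

noncomputable def cellsA (l : List Bool) : Finset (ℕ × ℕ) :=
  (Finset.range (l.length+2) ×ˢ Finset.range (l.length+2)).filter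
    (fun q => 1 ≤ q.1 ∧ q.1 < q.2 ∧ cellL l q.1 q.2)

noncomputable def areaAL (l : List Bool) : ℕ := (cellsA l).card

lemma mem_cellsB {m : ℕ} {l : List Bool} {q : ℕ × ℕ} :
    q ∈ cellsB m l ↔ 1 ≤ q.1 ∧ q.1 < q.2 ∧ q.2 ≤ m + 1 - q.1 ∧ cellL l q.1 q.2 := by
  constructor
  · intro h
    exact (Finset.mem_filter.1 h).2
  · rintro ⟨h1, h2, h3, h4⟩
    refine Finset.mem_filter.2 ⟨Finset.mem_product.2 ⟨Finset.mem_range.2 ?_, Finset.mem_range.2 ?_⟩,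
      h1, h2, h3, h4⟩ <;> omega

lemma mem_cellsA {l : List Bool} {q : ℕ × ℕ} :
    q ∈ cellsA l ↔ 1 ≤ q.1 ∧ q.1 < q.2 ∧ cellL l q.1 q.2 := by
  constructor
  · intro h
    exact (Finset.mem_filter.1 h).2
  · rintro ⟨h1, h2, h4⟩
    have h5 : q.2 ≤ l.length := (cellL_le_count h4).trans (count_le_length l)
    refine Finset.mem_filter.2 ⟨Finset.mem_product.2 ⟨Finset.mem_range.2 ?_, Finset.mem_range.2 ?_⟩,
      h1, h2, h4⟩ <;> omega

/-! ### chunk 5 : area lemmas -/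

lemma areaBL_append {d p : List Bool} (hh : HalfL d) (hbal : d.count true = d.count false) :
    areaBL (d.length + p.length) (d ++ p) = areaAL d + areaBL p.length p := by
  set a := d.count true with ha
  have hF : d.count false = a := hbal.symm
  have hlen : d.length = 2 * a := by have := count_tf d; omega
  set M := d.length + p.length with hM
  have hsplit := Finset.card_filter_add_card_filter_not
    (s := cellsB M (d ++ p)) (p := fun q => q.1 ≤ a)
  have hlow : (cellsB M (d ++ p)).filter (fun q => q.1 ≤ a) = cellsA d := by
    ext q
    constructor
    · intro hq
      obtain ⟨hmem, h5⟩ := Finset.mem_filter.1 hq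
      obtain ⟨h1, h2, h3, h4⟩ := mem_cellsB.1 hmem
      exact mem_cellsA.2 ⟨h1, h2, (cellL_append_low (by omega)).1 h4⟩
    · intro hq
      obtain ⟨h1, h2, h4⟩ := mem_cellsA.1 hq
      have hj : q.2 ≤ a := cellL_le_count h4
      have h4' : cellL (d ++ p) q.1 q.2 := (cellL_append_low (by omega)).2 h4
      exact Finset.mem_filter.2 ⟨mem_cellsB.2 ⟨h1, h2, by omega, h4'⟩, by omega⟩
  have hhigh : ((cellsB M (d ++ p)).filter (fun q => ¬ q.1 ≤ a)).card
      = (cellsB p.length p).card := by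
    apply Finset.card_nbij' (i := fun q => (q.1 - a, q.2 - a)) (j := fun q => (q.1 + a, q.2 + a))
    · intro q hq
      dsimp only
      obtain ⟨hmem, h5⟩ := Finset.mem_filter.1 hq
      obtain ⟨h1, h2, h3, h4⟩ := mem_cellsB.1 hmem
      refine mem_cellsB.2 ⟨by omega, by omega, by omega, ?_⟩
      exact (cellL_append_high rfl hF (by omega) (by omega)).1 h4
    · intro q hq
      dsimp only
      obtain ⟨h1, h2, h3, h4⟩ := mem_cellsB.1 hq
      refine Finset.mem_filter.2 ⟨mem_cellsB.2 ⟨by omega, by omega, by omega, ?_⟩, by omega⟩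
      have := cellL_append_high (p := p) (i := q.1 + a) (j := q.2 + a) rfl hF (by omega) (by omega)
      simp only [Nat.add_sub_cancel, ← ha] at this
      exact this.2 h4
    · intro q hq
      obtain ⟨hmem, h5⟩ := Finset.mem_filter.1 hq
      obtain ⟨h1, h2, h3, h4⟩ := mem_cellsB.1 hmem
      have : q.2 > a := by omega
      ext <;> simp <;> omega
    · intro q hq
      obtain ⟨h1, h2, h3, h4⟩ := mem_cellsB.1 hq
      ext <;> simp
  rw [areaBL, ← hsplit, hlow]
  rw [areaAL, hhigh, areaBL]

lemma areaAL_append {d p : List Bool} (hh : HalfL d) (hbal : d.count true = d.count false) :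
    areaAL (d ++ p) = areaAL d + areaAL p := by
  set a := d.count true with ha
  have hF : d.count false = a := hbal.symm
  have hlen : d.length = 2 * a := by have := count_tf d; omega
  have hsplit := Finset.card_filter_add_card_filter_not
    (s := cellsA (d ++ p)) (p := fun q => q.1 ≤ a)
  have hlow : (cellsA (d ++ p)).filter (fun q => q.1 ≤ a) = cellsA d := by
    ext q
    constructor
    · intro hq
      obtain ⟨hmem, h5⟩ := Finset.mem_filter.1 hq
      obtain ⟨h1, h2, h4⟩ := mem_cellsA.1 hmem
      exact mem_cellsA.2 ⟨h1, h2, (cellL_append_low (by omega)).1 h4⟩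
    · intro hq
      obtain ⟨h1, h2, h4⟩ := mem_cellsA.1 hq
      have hj : q.2 ≤ a := cellL_le_count h4
      have h4' : cellL (d ++ p) q.1 q.2 := (cellL_append_low (by omega)).2 h4
      exact Finset.mem_filter.2 ⟨mem_cellsA.2 ⟨h1, h2, h4'⟩, by omega⟩
  have hhigh : ((cellsA (d ++ p)).filter (fun q => ¬ q.1 ≤ a)).card = (cellsA p).card := by
    apply Finset.card_nbij' (i := fun q => (q.1 - a, q.2 - a)) (j := fun q => (q.1 + a, q.2 + a))
    · intro q hq
      dsimp only
      obtain ⟨hmem, h5⟩ := Finset.mem_filter.1 hq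
      obtain ⟨h1, h2, h4⟩ := mem_cellsA.1 hmem
      refine mem_cellsA.2 ⟨by omega, by omega, ?_⟩
      exact (cellL_append_high rfl hF (by omega) (by omega)).1 h4
    · intro q hq
      dsimp only
      obtain ⟨h1, h2, h4⟩ := mem_cellsA.1 hq
      refine Finset.mem_filter.2 ⟨mem_cellsA.2 ⟨by omega, by omega, ?_⟩, by omega⟩
      have := cellL_append_high (p := p) (i := q.1 + a) (j := q.2 + a) rfl hF (by omega) (by omega)
      simp only [Nat.add_sub_cancel, ← ha] at this
      exact this.2 h4
    · intro q hq
      obtain ⟨hmem, h5⟩ := Finset.mem_filter.1 hq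
      obtain ⟨h1, h2, h4⟩ := mem_cellsA.1 hmem
      ext <;> simp <;> omega
    · intro q hq
      ext <;> simp
  rw [areaAL, ← hsplit, hlow, hhigh]
  rfl

lemma areaBL_cons_true {s : List Bool} (hs : HalfL s) :
    areaBL (s.length + 1) (true :: s) = (s.length + 1) / 2 + areaBL s.length s := by
  set M := s.length + 1 with hM
  set U : Finset (ℕ × ℕ) := (Finset.range (M+2) ×ˢ Finset.range (M+2)).filter
    (fun q => 1 ≤ q.1 ∧ q.1 ≤ q.2 ∧ q.2 ≤ M - q.1 ∧ cellL s q.1 q.2) with hU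
  have hmemU : ∀ q : ℕ × ℕ, q ∈ U ↔ 1 ≤ q.1 ∧ q.1 ≤ q.2 ∧ q.2 ≤ M - q.1 ∧ cellL s q.1 q.2 := by
    intro q
    constructor
    · intro h; exact (Finset.mem_filter.1 h).2
    · rintro ⟨h1, h2, h3, h4⟩
      refine Finset.mem_filter.2 ⟨Finset.mem_product.2 ⟨Finset.mem_range.2 ?_,
        Finset.mem_range.2 ?_⟩, h1, h2, h3, h4⟩ <;> omega
  have hstep1 : areaBL M (true :: s) = U.card := by
    apply Finset.card_nbij' (i := fun q => (q.1, q.2 - 1)) (j := fun q => (q.1, q.2 + 1))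
    · intro q hq
      dsimp only
      obtain ⟨h1, h2, h3, h4⟩ := mem_cellsB.1 hq
      refine (hmemU _).2 ⟨h1, by omega, by omega, ?_⟩
      exact (cellL_cons_true (by omega)).1 (by simpa [List.length_cons] using h4)
    · intro q hq
      dsimp only
      obtain ⟨h1, h2, h3, h4⟩ := (hmemU _).1 hq
      refine mem_cellsB.2 ⟨h1, by omega, ?_, ?_⟩
      · simp only [List.length_cons]; omega
      · have := (cellL_cons_true (s := s) (i := q.1) (j := q.2 + 1) (by omega)).2
        simp only [Nat.add_sub_cancel] at this
        exact this h4
    · intro q hq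
      obtain ⟨h1, h2, h3, h4⟩ := mem_cellsB.1 hq
      ext <;> simp <;> omega
    · intro q hq
      ext <;> simp
  have hsplit := Finset.card_filter_add_card_filter_not
    (s := U) (p := fun q => q.1 < q.2)
  have hoff : U.filter (fun q => q.1 < q.2) = cellsB s.length s := by
    ext q
    simp only [Finset.mem_filter]
    constructor
    · rintro ⟨hmem, h5⟩
      obtain ⟨h1, h2, h3, h4⟩ := (hmemU _).1 hmem
      exact mem_cellsB.2 ⟨h1, h5, by omega, h4⟩
    · intro hq
      obtain ⟨h1, h2, h3, h4⟩ := mem_cellsB.1 hq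
      exact ⟨(hmemU _).2 ⟨h1, by omega, by omega, h4⟩, h2⟩
  have hdiag : (U.filter (fun q => ¬ q.1 < q.2)).card = M / 2 := by
    have : (U.filter (fun q => ¬ q.1 < q.2)).card = (Finset.Icc 1 (M / 2)).card := by
      apply Finset.card_nbij' (i := fun q => q.1) (j := fun i => (i, i))
      · intro q hq
        dsimp only
        obtain ⟨hmem, h5⟩ := Finset.mem_filter.1 hq
        obtain ⟨h1, h2, h3, h4⟩ := (hmemU _).1 hmem
        have hqq : q.2 = q.1 := by omega
        rw [Finset.mem_coe, Finset.mem_Icc]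
        omega
      · intro i hi
        dsimp only
        rw [Finset.mem_coe, Finset.mem_Icc] at hi
        have hcount : M ≤ 2 * s.count true + 1 := by
          have := hs.count_true_ge; omega
        refine Finset.mem_filter.2 ⟨(hmemU _).2 ⟨hi.1, le_rfl, by omega, ?_⟩, by omega⟩
        exact (cellL_diag hs hi.1).2 (by omega)
      · intro q hq
        obtain ⟨hmem, h5⟩ := Finset.mem_filter.1 hq
        obtain ⟨h1, h2, h3, h4⟩ := (hmemU _).1 hmem
        ext <;> simp <;> omega
      · intro i hi
        simp
    rw [this, Nat.card_Icc]
    omega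
  rw [hstep1, ← hsplit, hoff, hdiag]
  rw [areaBL]
  omega

lemma areaAL_elev {u : List Bool} (hu : HalfL u) (hbal : u.count true = u.count false) :
    areaAL (true :: (u ++ [false])) = u.count true + areaAL u := by
  set c : List Bool := true :: (u ++ [false]) with hc
  have hclen : c.length = u.length + 2 := by simp [hc]
  set U : Finset (ℕ × ℕ) := (Finset.range (c.length+2) ×ˢ Finset.range (c.length+2)).filter
    (fun q => 1 ≤ q.1 ∧ q.1 ≤ q.2 ∧ cellL u q.1 q.2) with hU
  have hmemU : ∀ q : ℕ × ℕ, q ∈ U ↔ 1 ≤ q.1 ∧ q.1 ≤ q.2 ∧ cellL u q.1 q.2 := by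
    intro q
    constructor
    · intro h; exact (Finset.mem_filter.1 h).2
    · rintro ⟨h1, h2, h4⟩
      have h5 : q.2 ≤ u.length := (cellL_le_count h4).trans (count_le_length u)
      refine Finset.mem_filter.2 ⟨Finset.mem_product.2 ⟨Finset.mem_range.2 ?_,
        Finset.mem_range.2 ?_⟩, h1, h2, h4⟩ <;> omega
  have hstep1 : areaAL c = U.card := by
    apply Finset.card_nbij' (i := fun q => (q.1, q.2 - 1)) (j := fun q => (q.1, q.2 + 1))
    · intro q hq
      dsimp only
      obtain ⟨h1, h2, h4⟩ := mem_cellsA.1 hq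
      exact (hmemU _).2 ⟨h1, by omega, (cellL_elev hbal h1 h2).1 h4⟩
    · intro q hq
      dsimp only
      obtain ⟨h1, h2, h4⟩ := (hmemU _).1 hq
      refine mem_cellsA.2 ⟨h1, by omega, ?_⟩
      have := (cellL_elev (u := u) hbal (i := q.1) (j := q.2 + 1) h1 (by omega)).2
      simp only [Nat.add_sub_cancel] at this
      exact this h4
    · intro q hq
      obtain ⟨h1, h2, h4⟩ := mem_cellsA.1 hq
      ext <;> simp <;> omega
    · intro q hq
      ext <;> simp
  have hsplit := Finset.card_filter_add_card_filter_not
    (s := U) (p := fun q => q.1 < q.2)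
  have hoff : U.filter (fun q => q.1 < q.2) = cellsA u := by
    ext q
    simp only [Finset.mem_filter]
    constructor
    · rintro ⟨hmem, h5⟩
      obtain ⟨h1, h2, h4⟩ := (hmemU _).1 hmem
      exact mem_cellsA.2 ⟨h1, h5, h4⟩
    · intro hq
      obtain ⟨h1, h2, h4⟩ := mem_cellsA.1 hq
      exact ⟨(hmemU _).2 ⟨h1, by omega, h4⟩, h2⟩
  have hdiag : (U.filter (fun q => ¬ q.1 < q.2)).card = u.count true := by
    have : (U.filter (fun q => ¬ q.1 < q.2)).card = (Finset.Icc 1 (u.count true)).card := by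
      apply Finset.card_nbij' (i := fun q => q.1) (j := fun i => (i, i))
      · intro q hq
        dsimp only
        obtain ⟨hmem, h5⟩ := Finset.mem_filter.1 hq
        obtain ⟨h1, h2, h4⟩ := (hmemU _).1 hmem
        have hqq : q.2 = q.1 := by omega
        rw [Finset.mem_coe, Finset.mem_Icc]
        refine ⟨h1, ?_⟩
        have := cellL_le_count h4
        omega
      · intro i hi
        dsimp only
        rw [Finset.mem_coe, Finset.mem_Icc] at hi
        refine Finset.mem_filter.2 ⟨(hmemU _).2 ⟨hi.1, le_rfl, ?_⟩, by omega⟩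
        exact (cellL_diag hu hi.1).2 hi.2
      · intro q hq
        obtain ⟨hmem, h5⟩ := Finset.mem_filter.1 hq
        obtain ⟨h1, h2, h4⟩ := (hmemU _).1 hmem
        ext <;> simp <;> omega
      · intro i hi
        simp
    rw [this, Nat.card_Icc]
    omega
  rw [hstep1, ← hsplit, hoff, hdiag]
  rw [areaAL]
  omega



/-! step lemmas for the bridge -/

lemma cN_succ (l : List Bool) (k : ℕ) :
    cN l (k + 1) = cN l k + (if h : k < l.length then (if l[k] then 1 else 0) else 0) := by
  rcases lt_or_ge k l.length with h | h
  · have h1 : l.take (k+1) = l.take k ++ l[k]?.toList := List.take_succ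
    have h2 : l[k]? = some l[k] := List.getElem?_eq_getElem h
    rw [cN, h1, h2, List.count_append]
    rcases hb : l[k] with _ | _ <;> simp [cN, h, hb]
  · have h1 : l.take (k+1) = l.take k ++ l[k]?.toList := List.take_succ
    have h2 : l[k]? = none := List.getElem?_eq_none h
    rw [cN, h1, h2, List.count_append]
    simp [cN, Nat.not_lt.2 h]

lemma cE_succ (l : List Bool) (k : ℕ) :
    cE l (k + 1) = cE l k + (if h : k < l.length then (if l[k] then 0 else 1) else 0) := by
  rcases lt_or_ge k l.length with h | h
  · have h1 : l.take (k+1) = l.take k ++ l[k]?.toList := List.take_succ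
    have h2 : l[k]? = some l[k] := List.getElem?_eq_getElem h
    rw [cE, h1, h2, List.count_append]
    rcases hb : l[k] with _ | _ <;> simp [cE, h, hb]
  · have h1 : l.take (k+1) = l.take k ++ l[k]?.toList := List.take_succ
    have h2 : l[k]? = none := List.getElem?_eq_none h
    rw [cE, h1, h2, List.count_append]
    simp [cE, Nat.not_lt.2 h]

/-! counts on `Fin` paths (as in the problem statement) -/


lemma countN_succ {m : ℕ} (w : Fin m → Bool) (k : ℕ) :
    countN w (k + 1) = countN w k + (if h : k < m then (if w ⟨k, h⟩ then 1 else 0) else 0) := by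
  classical
  rw [countN, countN, Finset.card_filter, Finset.card_filter]
  have hsum : ∀ t : Fin m,
      (if (t : ℕ) < k + 1 ∧ w t = true then 1 else 0)
        = (if (t : ℕ) < k ∧ w t = true then 1 else 0)
          + (if (t : ℕ) = k ∧ w t = true then 1 else 0) := by
    intro t
    by_cases hw : w t = true
    · simp only [hw, and_true]
      split_ifs <;> omega
    · simp [hw]
  rw [Finset.sum_congr rfl (fun t _ => hsum t), Finset.sum_add_distrib]
  congr 1
  rcases lt_or_ge k m with h | h
  · rw [Finset.sum_eq_single (⟨k, h⟩ : Fin m)]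
    · simp [h]
    · intro t _ ht
      have : ¬ ((t : ℕ) = k ∧ w t = true) := by
        rintro ⟨h1, -⟩
        exact ht (Fin.ext h1)
      simp [this]
    · intro ht
      exact absurd (Finset.mem_univ _) ht
  · rw [Finset.sum_eq_zero, dif_neg (Nat.not_lt.2 h)]
    intro t _
    have : ¬ ((t : ℕ) = k ∧ w t = true) := by
      rintro ⟨h1, -⟩
      have := t.isLt
      omega
    simp [this]

lemma countE_succ {m : ℕ} (w : Fin m → Bool) (k : ℕ) :
    countE w (k + 1) = countE w k + (if h : k < m then (if w ⟨k, h⟩ then 0 else 1) else 0) := by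
  classical
  rw [countE, countE, Finset.card_filter, Finset.card_filter]
  have hsum : ∀ t : Fin m,
      (if (t : ℕ) < k + 1 ∧ w t = false then 1 else 0)
        = (if (t : ℕ) < k ∧ w t = false then 1 else 0)
          + (if (t : ℕ) = k ∧ w t = false then 1 else 0) := by
    intro t
    by_cases hw : w t = false
    · simp only [hw, and_true]
      split_ifs <;> omega
    · simp [hw]
  rw [Finset.sum_congr rfl (fun t _ => hsum t), Finset.sum_add_distrib]
  congr 1
  rcases lt_or_ge k m with h | h
  · rw [Finset.sum_eq_single (⟨k, h⟩ : Fin m)]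
    · rcases hb : w ⟨k, h⟩ <;> simp [h, hb]
    · intro t _ ht
      have : ¬ ((t : ℕ) = k ∧ w t = false) := by
        rintro ⟨h1, -⟩
        exact ht (Fin.ext h1)
      simp [this]
    · intro ht
      exact absurd (Finset.mem_univ _) ht
  · rw [Finset.sum_eq_zero, dif_neg (Nat.not_lt.2 h)]
    intro t _
    have : ¬ ((t : ℕ) = k ∧ w t = false) := by
      rintro ⟨h1, -⟩
      have := t.isLt
      omega
    simp [this]

lemma countN_eq_cN {m : ℕ} (w : Fin m → Bool) (k : ℕ) : countN w k = cN (List.ofFn w) k := by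
  induction k with
  | zero =>
    simp [countN, cN]
  | succ k ih =>
    rw [countN_succ, cN_succ, ih]
    congr 1
    rcases lt_or_ge k m with h | h
    · rw [dif_pos h, dif_pos (by simpa using h)]
      congr 1
      simp [List.getElem_ofFn]
    · rw [dif_neg (Nat.not_lt.2 h), dif_neg (by simpa using Nat.not_lt.2 h)]

lemma countE_eq_cE {m : ℕ} (w : Fin m → Bool) (k : ℕ) : countE w k = cE (List.ofFn w) k := by
  induction k with
  | zero =>
    simp [countE, cE]
  | succ k ih =>
    rw [countE_succ, cE_succ, ih]
    congr 1
    rcases lt_or_ge k m with h | h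
    · rw [dif_pos h, dif_pos (by simpa using h)]
      congr 1
      simp [List.getElem_ofFn]
    · rw [dif_neg (Nat.not_lt.2 h), dif_neg (by simpa using Nat.not_lt.2 h)]

/-! all words of a given length -/

def allW : ℕ → Finset (List Bool)
  | 0 => {[]}
  | m + 1 => (allW m).biUnion (fun l => {true :: l, false :: l})

lemma mem_allW {m : ℕ} {l : List Bool} : l ∈ allW m ↔ l.length = m := by
  induction m generalizing l with
  | zero => simp [allW, List.length_eq_zero_iff]
  | succ m ih =>
    simp only [allW, Finset.mem_biUnion]
    constructor
    · rintro ⟨t, ht, hl⟩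
      simp only [Finset.mem_insert, Finset.mem_singleton] at hl
      rcases hl with rfl | rfl <;> simp [ih.1 ht]
    · intro hl
      rcases l with _ | ⟨x, t⟩
      · simp at hl
      · refine ⟨t, ih.2 (by simpa using hl), ?_⟩
        rcases x <;> simp



/-! ### chunk 7 : transfer -/

lemma cN_min (l : List Bool) (k : ℕ) : cN l k = cN l (min k l.length) := by
  rw [cN, cN]
  congr 1
  conv_lhs => rw [← List.take_length (l := l)]
  rw [List.take_take]

lemma cE_min (l : List Bool) (k : ℕ) : cE l k = cE l (min k l.length) := by
  rw [cE, cE]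
  congr 1
  conv_lhs => rw [← List.take_length (l := l)]
  rw [List.take_take]

lemma cellBelow_iff {m : ℕ} (w : Fin m → Bool) (i j : ℕ) :
    CellBelow w i j ↔ cellL (List.ofFn w) i j := by
  have hlen : (List.ofFn w).length = m := List.length_ofFn
  constructor
  · rintro ⟨k, he, hn⟩
    rw [countE_eq_cE, cE_min, hlen] at he
    rw [countN_eq_cN, cN_min, hlen] at hn
    exact ⟨min k m, by omega, he, hn⟩
  · rintro ⟨k, hk, he, hn⟩
    exact ⟨k, by rwa [countE_eq_cE], by rwa [countN_eq_cN]⟩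

lemma areaA_eq {m : ℕ} (w : Fin m → Bool) : areaA w = areaAL (List.ofFn w) := by
  rw [areaA]
  have hset : {p : ℕ × ℕ | 1 ≤ p.1 ∧ p.1 < p.2 ∧ CellBelow w p.1 p.2}
      = ↑(cellsA (List.ofFn w)) := by
    ext p
    simp only [Set.mem_setOf_eq, Finset.coe_sort_coe, Finset.mem_coe, mem_cellsA,
      cellBelow_iff]
  rw [hset, Set.ncard_coe_finset]
  rfl

lemma areaB_eq (n : ℕ) (w : Fin (2 * n) → Bool) : areaB n w = areaBL (2 * n) (List.ofFn w) := by
  rw [areaB]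
  have hset : {p : ℕ × ℕ | 1 ≤ p.1 ∧ p.1 < p.2 ∧ p.2 ≤ 2 * n + 1 - p.1 ∧ CellBelow w p.1 p.2}
      = ↑(cellsB (2 * n) (List.ofFn w)) := by
    ext p
    simp only [Set.mem_setOf_eq, Finset.mem_coe, mem_cellsB, cellBelow_iff]
  rw [hset, Set.ncard_coe_finset]
  rfl

/-! word finsets and polynomials -/

noncomputable def HWf (m : ℕ) : Finset (List Bool) := (allW m).filter HalfL
noncomputable def Dyf (a : ℕ) : Finset (List Bool) :=
  (allW (2 * a)).filter (fun l => HalfL l ∧ l.count true = a)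
noncomputable def Stf (t : ℕ) : Finset (List Bool) := (allW t).filter StrictL

noncomputable def Cp (a : ℕ) : Polynomial ℤ := ∑ l ∈ Dyf a, Polynomial.X ^ areaAL l
noncomputable def Chp (m : ℕ) : Polynomial ℤ := ∑ l ∈ HWf m, Polynomial.X ^ areaBL m l
noncomputable def Sp (t : ℕ) : Polynomial ℤ := ∑ l ∈ Stf t, Polynomial.X ^ areaBL t l

lemma ofFn_exists {m : ℕ} {l : List Bool} (h : l.length = m) :
    ∃ w : Fin m → Bool, List.ofFn w = l := by
  refine ⟨fun i => l[(i : ℕ)]'(by omega), ?_⟩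
  apply List.ext_getElem
  · simp [h]
  · intro i h1 h2
    simp

lemma CatA_eq (n : ℕ) : CatA n = Cp n := by
  rw [CatA, Cp]
  apply Finset.sum_bij (i := fun w _ => List.ofFn w)
  · intro w hw
    obtain ⟨h1, h2⟩ := (Finset.mem_filter.1 hw).2
    refine Finset.mem_filter.2 ⟨mem_allW.2 (by simp), ?_, ?_⟩
    · intro k
      rw [← countN_eq_cN, ← countE_eq_cE]
      exact h2 k
    · rw [← cN_of_le (List.ofFn w) (k := 2 * n) (by simp), ← countN_eq_cN]
      exact h1
  · intro w1 h1 w2 h2 heq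
    exact List.ofFn_injective heq
  · intro l hl
    obtain ⟨hlen, hhalf, hcount⟩ := Finset.mem_filter.1 hl
    rw [mem_allW] at hlen
    obtain ⟨w, rfl⟩ := ofFn_exists hlen
    refine ⟨w, Finset.mem_filter.2 ⟨Finset.mem_univ _, ?_, ?_⟩, rfl⟩
    · rw [countN_eq_cN, cN_of_le (List.ofFn w) (by simp)]
      exact hcount
    · intro k
      rw [countN_eq_cN, countE_eq_cE]
      exact hhalf k
  · intro w hw
    rw [areaA_eq]

lemma CatB_eq (n : ℕ) : CatB n = Chp (2 * n) := by
  rw [CatB, Chp]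
  apply Finset.sum_bij (i := fun w _ => List.ofFn w)
  · intro w hw
    have h2 := (Finset.mem_filter.1 hw).2
    refine Finset.mem_filter.2 ⟨mem_allW.2 (by simp), ?_⟩
    intro k
    rw [← countN_eq_cN, ← countE_eq_cE]
    exact h2 k
  · intro w1 h1 w2 h2 heq
    exact List.ofFn_injective heq
  · intro l hl
    obtain ⟨hlen, hhalf⟩ := Finset.mem_filter.1 hl
    rw [mem_allW] at hlen
    obtain ⟨w, rfl⟩ := ofFn_exists hlen
    refine ⟨w, Finset.mem_filter.2 ⟨Finset.mem_univ _, ?_⟩, rfl⟩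
    intro k
    rw [countN_eq_cN, countE_eq_cE]
    exact hhalf k
  · intro w hw
    rw [areaB_eq]



lemma cN_take (l : List Bool) (K k : ℕ) : cN (l.take K) k = cN l (min k K) := by
  rw [cN, cN, List.take_take]

lemma cE_take (l : List Bool) (K k : ℕ) : cE (l.take K) k = cE l (min k K) := by
  rw [cE, cE, List.take_take]

lemma HalfL.take {l : List Bool} (h : HalfL l) (K : ℕ) : HalfL (l.take K) := by
  intro k
  rw [cN_take, cE_take]; exact h _

/-! ### I2 -/

lemma strict_cons {s : List Bool} (hs : HalfL s) : StrictL (true :: s) := by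
  intro k hk1 hk2
  obtain ⟨k', rfl⟩ : ∃ k', k = k' + 1 := ⟨k - 1, by omega⟩
  rw [cE_cons_succ, cN_cons_succ]
  simp only [if_true]
  have := hs k'
  omega

lemma strict_dest {p : List Bool} (hp : StrictL p) (hne : p ≠ []) :
    ∃ s, p = true :: s ∧ HalfL s := by
  rcases p with _ | ⟨x, s⟩
  · exact absurd rfl hne
  · have h1 := hp 1 le_rfl (by simp)
    rw [show (1 : ℕ) = 0 + 1 from rfl, cE_cons_succ, cN_cons_succ] at h1
    simp only [cN_zero, cE_zero] at h1
    rcases x with _ | _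
    · simp at h1
    · refine ⟨s, rfl, HalfL_of_bounded (fun k hk => ?_)⟩
      have h2 := hp (k + 1) (by omega) (by simp; omega)
      rw [cE_cons_succ, cN_cons_succ] at h2
      simp only [if_true] at h2
      omega

lemma Sp_eq (L : ℕ) (hL : 1 ≤ L) : Sp L = Polynomial.X ^ (L / 2) * Chp (L - 1) := by
  rw [Chp, Finset.mul_sum, Sp]
  symm
  apply Finset.sum_bij (i := fun s _ => true :: s)
  · intro s hs
    obtain ⟨hlen, hhalf⟩ := Finset.mem_filter.1 hs
    rw [mem_allW] at hlen
    refine Finset.mem_filter.2 ⟨mem_allW.2 (by simp; omega), strict_cons hhalf⟩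
  · intro s1 h1 s2 h2 heq
    simpa using heq
  · intro p hp
    obtain ⟨hlen, hstrict⟩ := Finset.mem_filter.1 hp
    rw [mem_allW] at hlen
    obtain ⟨s, rfl, hs⟩ := strict_dest hstrict (by intro h; rw [h] at hlen; simp at hlen; omega)
    refine ⟨s, Finset.mem_filter.2 ⟨mem_allW.2 (by simp at hlen; omega), hs⟩, rfl⟩
  · intro s hs
    obtain ⟨hlen, hhalf⟩ := Finset.mem_filter.1 hs
    rw [mem_allW] at hlen
    have harea : areaBL L (true :: s) = L / 2 + areaBL (L - 1) s := by
      have := areaBL_cons_true hhalf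
      rw [hlen] at this
      rw [show L - 1 + 1 = L by omega] at this
      rw [this]
    rw [harea, pow_add]

/-! ### I1 -/

lemma balance_at_append {d p : List Bool} {a : ℕ} (hT : d.count true = a)
    (hF : d.count false = a) {k : ℕ} (hk : d.length ≤ k) :
    cE (d ++ p) k = a + cE p (k - d.length) ∧ cN (d ++ p) k = a + cN p (k - d.length) := by
  rw [cE_append, cN_append, cE_of_le d hk, cN_of_le d hk, hT, hF]
  exact ⟨rfl, rfl⟩

lemma strict_after {d p : List Bool} {a : ℕ} (hT : d.count true = a)
    (hF : d.count false = a) (hp : StrictL p) {k : ℕ} (hk1 : d.length < k)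
    (hk2 : k ≤ d.length + p.length) :
    cE (d ++ p) k < cN (d ++ p) k := by
  obtain ⟨he, hn⟩ := balance_at_append (p := p) hT hF (k := k) hk1.le
  rw [he, hn]
  have := hp (k - d.length) (by omega) (by omega)
  omega

lemma Chp_eq (m : ℕ) : Chp m = ∑ a ∈ Finset.range (m / 2 + 1), Cp a * Sp (m - 2 * a) := by
  have hterm : ∀ a ∈ Finset.range (m / 2 + 1), Cp a * Sp (m - 2 * a)
      = ∑ dp ∈ Dyf a ×ˢ Stf (m - 2 * a),
          (Polynomial.X : Polynomial ℤ) ^ (areaAL dp.1 + areaBL (m - 2 * a) dp.2) := by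
    intro a _
    rw [Cp, Sp, Finset.sum_mul_sum, Finset.sum_product]
    refine Finset.sum_congr rfl fun d _ => Finset.sum_congr rfl fun p _ => ?_
    rw [pow_add]
  have hsig : ∑ x ∈ (Finset.range (m / 2 + 1)).sigma (fun a => Dyf a ×ˢ Stf (m - 2 * a)),
        (Polynomial.X : Polynomial ℤ) ^ (areaAL x.2.1 + areaBL (m - 2 * x.1) x.2.2)
      = ∑ a ∈ Finset.range (m / 2 + 1), ∑ dp ∈ Dyf a ×ˢ Stf (m - 2 * a),
          (Polynomial.X : Polynomial ℤ) ^ (areaAL dp.1 + areaBL (m - 2 * a) dp.2) :=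
    Finset.sum_sigma _ _ _
  rw [Finset.sum_congr rfl hterm, ← hsig, Chp]
  symm
  apply Finset.sum_bij (i := fun x _ => x.2.1 ++ x.2.2)
  · rintro ⟨a, d, p⟩ hx
    obtain ⟨ha, hdp⟩ := Finset.mem_sigma.1 hx
    obtain ⟨hd, hp⟩ := Finset.mem_product.1 hdp
    dsimp only at ha hd hp
    rw [Finset.mem_range] at ha
    obtain ⟨hdlen, hdhalf, hdcount⟩ := Finset.mem_filter.1 hd
    obtain ⟨hplen, hpstrict⟩ := Finset.mem_filter.1 hp
    rw [mem_allW] at hdlen hplen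
    refine Finset.mem_filter.2 ⟨mem_allW.2 ?_, HalfL.append hdhalf hpstrict.halfL⟩
    simp [hdlen, hplen]; omega
  · rintro ⟨a1, d1, p1⟩ h1 ⟨a2, d2, p2⟩ h2 heq
    simp only at heq
    obtain ⟨ha1, hdp1⟩ := Finset.mem_sigma.1 h1
    obtain ⟨hd1, hp1⟩ := Finset.mem_product.1 hdp1
    obtain ⟨ha2, hdp2⟩ := Finset.mem_sigma.1 h2
    obtain ⟨hd2, hp2⟩ := Finset.mem_product.1 hdp2
    dsimp only at ha1 hd1 hp1 ha2 hd2 hp2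
    rw [Finset.mem_range] at ha1 ha2
    obtain ⟨hd1len, hd1half, hd1count⟩ := Finset.mem_filter.1 hd1
    obtain ⟨hp1len, hp1strict⟩ := Finset.mem_filter.1 hp1
    obtain ⟨hd2len, hd2half, hd2count⟩ := Finset.mem_filter.1 hd2
    obtain ⟨hp2len, hp2strict⟩ := Finset.mem_filter.1 hp2
    rw [mem_allW] at hd1len hp1len hd2len hp2len
    have hf1 : d1.count false = a1 := by have := count_tf d1; omega
    have hf2 : d2.count false = a2 := by have := count_tf d2; omega
    have key : ∀ (a a' : ℕ) (d p d' p' : List Bool), d.count true = a → d.count false = a →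
        d.length = 2 * a → p.length = m - 2 * a → 2 * a' ≤ m →
        d'.count true = a' → d'.count false = a' → d'.length = 2 * a' → StrictL p →
        d ++ p = d' ++ p' → ¬ (a < a') := by
      intro a a' d p d' p' hT hF hdl hpl ha' hT' hF' hdl' hps heq hlt
      have hbal := balance_at_append (p := p') hT' hF' (k := 2 * a') (by omega)
      rw [← heq] at hbal
      rw [hdl', Nat.sub_self] at hbal
      simp only [cN_zero, cE_zero] at hbal
      have hstrict := strict_after hT hF hps (k := 2 * a') (by omega) (by omega)
      omega
    have ha12 : a1 = a2 := by
      rcases lt_trichotomy a1 a2 with h | h | h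
      · exact absurd h (key a1 a2 d1 p1 d2 p2 hd1count hf1 hd1len hp1len (by omega)
          hd2count hf2 hd2len hp1strict heq)
      · exact h
      · exact absurd h (key a2 a1 d2 p2 d1 p1 hd2count hf2 hd2len hp2len (by omega)
          hd1count hf1 hd1len hp2strict heq.symm)
    subst ha12
    have hlen : d1.length = d2.length := by rw [hd1len, hd2len]
    obtain ⟨hde, hpe⟩ := List.append_inj heq hlen
    simp [hde, hpe]
  · intro l hl
    obtain ⟨hlen, hhalf⟩ := Finset.mem_filter.1 hl
    rw [mem_allW] at hlen
    set P : ℕ → Prop := fun a => cN l (2 * a) = a with hP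
    have hP0 : P 0 := by simp [hP]
    set a := Nat.findGreatest P (m / 2) with ha
    have hPa : P a := Nat.findGreatest_spec (Nat.zero_le _) hP0
    have hale : a ≤ m / 2 := Nat.findGreatest_le _
    have hgr : ∀ b, a < b → b ≤ m / 2 → ¬ P b := fun b h1 h2 =>
      Nat.findGreatest_is_greatest h1 h2
    set d := l.take (2 * a) with hd
    set p := l.drop (2 * a) with hp
    have hdp : d ++ p = l := List.take_append_drop _ l
    have hdlen : d.length = 2 * a := by
      rw [hd, List.length_take]; omega
    have hplen : p.length = m - 2 * a := by
      rw [hp, List.length_drop]; omega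
    have hdcount : d.count true = a := by
      have : d.count true = cN l (2 * a) := by rw [hd]; rfl
      rw [this]; exact hPa
    have hdhalf : HalfL d := hhalf.take _
    have hdfalse : d.count false = a := by have := count_tf d; omega
    have hpstrict : StrictL p := by
      intro k hk1 hk2
      have hcombE : cE l (2 * a + k) = a + cE p k := by
        conv_lhs => rw [← hdp]
        rw [cE_append, cE_of_le d (by omega), hdfalse, hdlen]
        congr 2
        omega
      have hcombN : cN l (2 * a + k) = a + cN p k := by
        conv_lhs => rw [← hdp]
        rw [cN_append, cN_of_le d (by omega), hdcount, hdlen]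
        congr 2
        omega
      have hhl := hhalf (2 * a + k)
      rw [hcombE, hcombN] at hhl
      rcases Nat.lt_or_ge (cE p k) (cN p k) with h | h
      · exact h
      · exfalso
        have heqc : cE p k = cN p k := by omega
        have hsum := cN_add_cE l (2 * a + k)
        rw [hcombE, hcombN] at hsum
        have hkm : 2 * a + k ≤ m := by omega
        rw [min_eq_left (by omega)] at hsum
        set c := cN p k with hc
        have hk2c : k = 2 * c := by omega
        have hcpos : 1 ≤ c := by omega
        have hPb : P (a + c) := by
          show cN l (2 * (a + c)) = a + c
          have h2ac : 2 * (a + c) = 2 * a + k := by omega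
          rw [h2ac, hcombN]
        exact hgr (a + c) (by omega) (by omega) hPb
    refine ⟨⟨a, d, p⟩, ?_, hdp⟩
    refine Finset.mem_sigma.2 ⟨Finset.mem_range.2 (by show a < m / 2 + 1; omega), Finset.mem_product.2 ⟨?_, ?_⟩⟩
    · exact Finset.mem_filter.2 ⟨mem_allW.2 hdlen, hdhalf, hdcount⟩
    · exact Finset.mem_filter.2 ⟨mem_allW.2 hplen, hpstrict⟩
  · rintro ⟨a, d, p⟩ hx
    obtain ⟨ha, hdp⟩ := Finset.mem_sigma.1 hx
    obtain ⟨hd, hp⟩ := Finset.mem_product.1 hdp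
    dsimp only at ha hd hp
    rw [Finset.mem_range] at ha
    obtain ⟨hdlen, hdhalf, hdcount⟩ := Finset.mem_filter.1 hd
    obtain ⟨hplen, hpstrict⟩ := Finset.mem_filter.1 hp
    rw [mem_allW] at hdlen hplen
    have hdfalse : d.count false = a := by have := count_tf d; omega
    have := areaBL_append (p := p) hdhalf (by omega)
    rw [hdlen, hplen] at this
    simp only
    rw [show 2 * a + (m - 2 * a) = m by omega] at this
    rw [this]
  done



/-! ### I3 : first-return decomposition for Dyck paths -/

lemma HalfL_elev {u : List Bool} (hu : HalfL u) : HalfL (true :: (u ++ [false])) := by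
  intro k
  rcases k with _ | k
  · simp
  · rw [cE_cons_succ, cN_cons_succ, cE_append, cN_append]
    simp only [if_true]
    have h1 : cN [false] (k - u.length) = 0 := by
      have := cN_le_count [false] (k - u.length)
      simpa using this
    have h2 : cE [false] (k - u.length) ≤ 1 := by
      have := cN_add_cE [false] (k - u.length)
      simp at this
      omega
    have h3 := hu k
    omega

lemma count_true_elev (u : List Bool) :
    (true :: (u ++ [false])).count true = 1 + u.count true := by
  simp [List.count_cons, List.count_append]
  omega

lemma count_false_elev (u : List Bool) :
    (true :: (u ++ [false])).count false = 1 + u.count false := by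
  simp [List.count_cons, List.count_append]
  omega

/-- Strictly above the diagonal before the end of the elevated part. -/
lemma elev_strict {u : List Bool} (hu : HalfL u) {k : ℕ} (hk1 : 1 ≤ k)
    (hk2 : k < u.length + 2) :
    cE (true :: (u ++ [false])) k < cN (true :: (u ++ [false])) k := by
  obtain ⟨k', rfl⟩ : ∃ k', k = k' + 1 := ⟨k - 1, by omega⟩
  rw [cE_cons_succ, cN_cons_succ, cE_append, cN_append]
  simp only [if_true]
  have h0 : k' - u.length = 0 := by omega
  rw [h0]
  simp only [cN_zero, cE_zero]
  have := hu k'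
  omega

/-- For `l = (true :: (u ++ [false])) ++ v` with `u` balanced: strictness before `2j+2`
and balance at `2j+2`. -/
lemma elev_append_strict {u v : List Bool} (hu : HalfL u)
    (hbal : u.count true = u.count false) {k : ℕ} (hk1 : 1 ≤ k)
    (hk2 : k < u.length + 2) :
    cE ((true :: (u ++ [false])) ++ v) k < cN ((true :: (u ++ [false])) ++ v) k := by
  rw [cE_append, cN_append]
  have h0 : k - (true :: (u ++ [false])).length = 0 := by simp; omega
  rw [h0]
  simp only [cN_zero, cE_zero, Nat.add_zero]
  exact elev_strict hu hk1 hk2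

lemma elev_append_balance {u v : List Bool} (hbal : u.count true = u.count false) :
    cE ((true :: (u ++ [false])) ++ v) (u.length + 2) = u.count true + 1
      ∧ cN ((true :: (u ++ [false])) ++ v) (u.length + 2) = u.count true + 1 := by
  have hlen : (true :: (u ++ [false])).length = u.length + 2 := by simp
  rw [cE_append, cN_append, hlen, Nat.sub_self]
  simp only [cN_zero, cE_zero, Nat.add_zero]
  rw [cE_of_le _ (le_of_eq hlen), cN_of_le _ (le_of_eq hlen), count_true_elev, count_false_elev]
  omega

lemma Cp_eq (M : ℕ) (hM : 1 ≤ M) :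
    Cp M = ∑ j ∈ Finset.range M, Polynomial.X ^ j * Cp j * Cp (M - 1 - j) := by
  have hterm : ∀ j ∈ Finset.range M, Polynomial.X ^ j * Cp j * Cp (M - 1 - j)
      = ∑ uv ∈ Dyf j ×ˢ Dyf (M - 1 - j),
          (Polynomial.X : Polynomial ℤ) ^ (j + areaAL uv.1 + areaAL uv.2) := by
    intro j _
    rw [mul_assoc, Cp, Cp, Finset.sum_mul_sum, Finset.mul_sum, Finset.sum_product]
    refine Finset.sum_congr rfl fun u _ => ?_
    rw [Finset.mul_sum]
    refine Finset.sum_congr rfl fun v _ => ?_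
    rw [pow_add, pow_add]
    ring
  have hsig : ∑ x ∈ (Finset.range M).sigma (fun j => Dyf j ×ˢ Dyf (M - 1 - j)),
        (Polynomial.X : Polynomial ℤ) ^ (x.1 + areaAL x.2.1 + areaAL x.2.2)
      = ∑ j ∈ Finset.range M, ∑ uv ∈ Dyf j ×ˢ Dyf (M - 1 - j),
          (Polynomial.X : Polynomial ℤ) ^ (j + areaAL uv.1 + areaAL uv.2) :=
    Finset.sum_sigma _ _ _
  rw [Finset.sum_congr rfl hterm, ← hsig, Cp]
  symm
  apply Finset.sum_bij (i := fun x _ => (true :: (x.2.1 ++ [false])) ++ x.2.2)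
  · rintro ⟨j, u, v⟩ hx
    obtain ⟨hj, huv⟩ := Finset.mem_sigma.1 hx
    obtain ⟨hu, hv⟩ := Finset.mem_product.1 huv
    dsimp only at hj hu hv ⊢
    rw [Finset.mem_range] at hj
    obtain ⟨hulen, huhalf, hucount⟩ := Finset.mem_filter.1 hu
    obtain ⟨hvlen, hvhalf, hvcount⟩ := Finset.mem_filter.1 hv
    rw [mem_allW] at hulen hvlen
    have hubal : u.count true = u.count false := by have := count_tf u; omega
    refine Finset.mem_filter.2 ⟨mem_allW.2 ?_, ?_, ?_⟩
    · simp [hulen, hvlen]; omega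
    · exact HalfL.append (HalfL_elev huhalf) hvhalf
    · rw [List.count_append, count_true_elev]
      omega
  · rintro ⟨j1, u1, v1⟩ h1 ⟨j2, u2, v2⟩ h2 heq
    dsimp only at heq
    obtain ⟨hj1, huv1⟩ := Finset.mem_sigma.1 h1
    obtain ⟨hu1, hv1⟩ := Finset.mem_product.1 huv1
    obtain ⟨hj2, huv2⟩ := Finset.mem_sigma.1 h2
    obtain ⟨hu2, hv2⟩ := Finset.mem_product.1 huv2
    dsimp only at hj1 hu1 hv1 hj2 hu2 hv2
    rw [Finset.mem_range] at hj1 hj2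
    obtain ⟨hu1len, hu1half, hu1count⟩ := Finset.mem_filter.1 hu1
    obtain ⟨hv1len, hv1half, hv1count⟩ := Finset.mem_filter.1 hv1
    obtain ⟨hu2len, hu2half, hu2count⟩ := Finset.mem_filter.1 hu2
    obtain ⟨hv2len, hv2half, hv2count⟩ := Finset.mem_filter.1 hv2
    rw [mem_allW] at hu1len hv1len hu2len hv2len
    have hb1 : u1.count true = u1.count false := by have := count_tf u1; omega
    have hb2 : u2.count true = u2.count false := by have := count_tf u2; omega
    have key : ∀ (u v u' v' : List Bool), HalfL u → u.count true = u.count false →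
        u'.count true = u'.count false →
        (true :: (u ++ [false])) ++ v = (true :: (u' ++ [false])) ++ v' →
        ¬ (u'.length < u.length) := by
      intro u v u' v' hu hbu hb' heq hlt
      have hbal := elev_append_balance (v := v') (u := u') hb'
      rw [← heq] at hbal
      have hstr := elev_append_strict (v := v) hu hbu (k := u'.length + 2) (by omega) (by omega)
      omega
    have hj12 : j1 = j2 := by
      rcases lt_trichotomy j1 j2 with h | h | h
      · exact absurd (by omega : u1.length < u2.length)
          (key u2 v2 u1 v1 hu2half hb2 hb1 heq.symm)
      · exact h
      · exact absurd (by omega : u2.length < u1.length)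
          (key u1 v1 u2 v2 hu1half hb1 hb2 heq)
    subst hj12
    have hlenc : (true :: (u1 ++ [false])).length = (true :: (u2 ++ [false])).length := by
      simp [hu1len, hu2len]
    obtain ⟨hce, hve⟩ := List.append_inj heq hlenc
    have hue : u1 = u2 := by
      have h1 : u1 ++ [false] = u2 ++ [false] := by
        injection hce
      exact (List.append_inj' h1 rfl).1
    simp [hue, hve]
  · intro l hl
    obtain ⟨hlen, hhalf, hcount⟩ := Finset.mem_filter.1 hl
    rw [mem_allW] at hlen
    have hPM : 1 ≤ M ∧ cN l (2 * M) = M := ⟨hM, by rw [cN_of_le l (by omega)]; exact hcount⟩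
    have hex : ∃ b, 1 ≤ b ∧ cN l (2 * b) = b := ⟨M, hPM⟩
    obtain ⟨hb1, hbN⟩ := Nat.find_spec hex
    set b := Nat.find hex with hb
    have hble : b ≤ M := Nat.find_min' hex hPM
    have hmin : ∀ c, c < b → ¬ (1 ≤ c ∧ cN l (2 * c) = c) := fun c hc => Nat.find_min hex hc
    have hstrict : ∀ k, 1 ≤ k → k < 2 * b → cE l k < cN l k := by
      intro k hk1 hk2
      rcases Nat.lt_or_ge (cE l k) (cN l k) with h | h
      · exact h
      · exfalso
        have hle := hhalf k
        have heqc : cE l k = cN l k := by omega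
        have hsum := cN_add_cE l k
        rw [min_eq_left (by omega)] at hsum
        have hk2c : k = 2 * cN l k := by omega
        exact hmin (cN l k) (by omega) ⟨by omega, by rw [← hk2c]⟩
    have hE2b : cE l (2 * b) = b := by
      have := cN_add_cE l (2 * b)
      rw [min_eq_left (by omega)] at this
      omega
    have hN2b1 : cN l (2 * b - 1) = b ∧ cE l (2 * b - 1) = b - 1 := by
      have hs := hstrict (2 * b - 1) (by omega) (by omega)
      have hsum := cN_add_cE l (2 * b - 1)
      rw [min_eq_left (by omega)] at hsum
      have hmono := cN_mono l (show 2 * b - 1 ≤ 2 * b by omega)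
      rw [hbN] at hmono
      omega
    have hN1 : cN l 1 = 1 := by
      have hs := hstrict 1 le_rfl (by omega)
      have hsum := cN_add_cE l 1
      rw [min_eq_left (by omega)] at hsum
      omega
    set c0 := l.take (2 * b) with hc0
    set v := l.drop (2 * b) with hv
    have hc0v : c0 ++ v = l := List.take_append_drop _ _
    have hc0len : c0.length = 2 * b := by rw [hc0, List.length_take]; omega
    have hvlen : v.length = 2 * M - 2 * b := by rw [hv, List.length_drop]; omega
    have hc0ne : c0 ≠ [] := by
      intro h
      rw [h] at hc0len
      simp at hc0len
      omega
    obtain ⟨x, t, hxt⟩ := List.exists_cons_of_ne_nil hc0ne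
    have htlen : t.length = 2 * b - 1 := by
      have := congrArg List.length hxt
      simp at this
      omega
    have hcNc0 : ∀ k, cN c0 k = cN l (min k (2 * b)) := fun k => cN_take l (2 * b) k
    have hcEc0 : ∀ k, cE c0 k = cE l (min k (2 * b)) := fun k => cE_take l (2 * b) k
    have hx : x = true := by
      have h1 : cN c0 1 = 1 := by
        rw [hcNc0, min_eq_left (by omega), hN1]
      rw [hxt, show (1 : ℕ) = 0 + 1 from rfl, cN_cons_succ] at h1
      simp only [cN_zero, Nat.add_zero] at h1
      rcases x with _ | _
      · simp at h1
      · rfl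
    subst hx
    have htN : ∀ k, cN c0 (k + 1) = 1 + cN t k := by
      intro k
      rw [hxt, cN_cons_succ]
      simp
    have htE : ∀ k, cE c0 (k + 1) = cE t k := by
      intro k
      rw [hxt, cE_cons_succ]
      simp
    have htNlen : cN t (2 * b - 1) = b - 1 := by
      have h1 := htN (2 * b - 2 + 1)
      rw [show 2 * b - 2 + 1 + 1 = 2 * b by omega, hcNc0, min_self, hbN] at h1
      rw [show 2 * b - 2 + 1 = 2 * b - 1 by omega] at h1
      omega
    have htNlen1 : cN t (2 * b - 2) = b - 1 := by
      have h1 := htN (2 * b - 2)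
      rw [show 2 * b - 2 + 1 = 2 * b - 1 by omega, hcNc0, min_eq_left (by omega)] at h1
      rw [hN2b1.1] at h1
      omega
    have hlast : t[t.length - 1]'(by omega) = false := by
      have hA : cN t t.length = b - 1 := by
        rw [htlen]
        exact htNlen
      have hB : cN t (t.length - 1) = b - 1 := by
        rw [htlen, show 2 * b - 1 - 1 = 2 * b - 2 by omega]
        exact htNlen1
      have hs := cN_succ t (t.length - 1)
      rw [dif_pos (by omega), show t.length - 1 + 1 = t.length by omega, hA, hB] at hs
      rcases hbool : t[t.length - 1]'(by omega) with _ | _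
      · rfl
      · rw [hbool] at hs
        simp at hs
    have htne : t ≠ [] := by
      intro h
      rw [h] at htlen
      simp at htlen
      omega
    set u := t.dropLast with hu
    have htu : u ++ [false] = t := by
      have h1 := List.dropLast_concat_getLast htne
      rw [List.getLast_eq_getElem] at h1
      rw [hlast] at h1
      exact h1
    have hc0elev : c0 = true :: (u ++ [false]) := by rw [hxt, htu]
    have hulen : u.length = 2 * b - 2 := by
      rw [hu, List.length_dropLast]
      omega
    have hucount : u.count true = b - 1 := by
      have h1 : t.count true = b - 1 := by
        rw [← cN_of_le t le_rfl, htlen, htNlen]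
      have h2 := congrArg (List.count true) htu
      rw [List.count_append] at h2
      simp at h2
      omega
    have huhalf : HalfL u := by
      refine HalfL_of_bounded (fun k hk => ?_)
      rw [hulen] at hk
      have hEu : cE u k = cE l (k + 1) := by
        have h1 := hcEc0 (k + 1)
        rw [min_eq_left (by omega), htE k, ← htu, cE_append,
          show k - u.length = 0 by omega] at h1
        simpa using h1
      have hNu : 1 + cN u k = cN l (k + 1) := by
        have h1 := hcNc0 (k + 1)
        rw [min_eq_left (by omega), htN k, ← htu, cN_append,
          show k - u.length = 0 by omega] at h1
        have h2 : cN [false] 0 = 0 := cN_zero _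
        rw [h2] at h1
        omega
      have hs := hstrict (k + 1) (by omega) (by omega)
      omega
    have hc0countT : c0.count true = b := by
      have h1 : c0.count true = cN c0 (2 * b) := by
        rw [← hc0len, cN_of_le c0 le_rfl]
      rw [h1, hcNc0, min_self, hbN]
    have hc0countF : c0.count false = b := by
      have := count_tf c0
      omega
    have hvhalf : HalfL v := by
      refine HalfL_of_bounded (fun k hk => ?_)
      have hEv : cE l (2 * b + k) = b + cE v k := by
        conv_lhs => rw [← hc0v]
        rw [cE_append, cE_of_le c0 (by omega), hc0countF, hc0len,
          show 2 * b + k - (2 * b) = k by omega]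
      have hNv : cN l (2 * b + k) = b + cN v k := by
        conv_lhs => rw [← hc0v]
        rw [cN_append, cN_of_le c0 (by omega), hc0countT, hc0len,
          show 2 * b + k - (2 * b) = k by omega]
      have := hhalf (2 * b + k)
      omega
    have hvcount : v.count true = M - b := by
      have h1 := congrArg (List.count true) hc0v
      rw [List.count_append] at h1
      rw [hcount] at h1
      omega
    refine ⟨⟨b - 1, u, v⟩, ?_, ?_⟩
    · refine Finset.mem_sigma.2 ⟨Finset.mem_range.2 (by show b - 1 < M; omega),
        Finset.mem_product.2 ⟨?_, ?_⟩⟩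
      · refine Finset.mem_filter.2 ⟨mem_allW.2 ?_, huhalf, ?_⟩
        · show u.length = 2 * (b - 1)
          omega
        · show u.count true = b - 1
          exact hucount
      · refine Finset.mem_filter.2 ⟨mem_allW.2 ?_, hvhalf, ?_⟩
        · show v.length = 2 * (M - 1 - (b - 1))
          omega
        · show v.count true = M - 1 - (b - 1)
          omega
    · dsimp only
      rw [← hc0elev, hc0v]
  · rintro ⟨j, u, v⟩ hx
    obtain ⟨hj, huv⟩ := Finset.mem_sigma.1 hx
    obtain ⟨hu, hv⟩ := Finset.mem_product.1 huv
    dsimp only at hj hu hv ⊢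
    rw [Finset.mem_range] at hj
    obtain ⟨hulen, huhalf, hucount⟩ := Finset.mem_filter.1 hu
    obtain ⟨hvlen, hvhalf, hvcount⟩ := Finset.mem_filter.1 hv
    rw [mem_allW] at hulen hvlen
    have hubal : u.count true = u.count false := by have := count_tf u; omega
    rw [areaAL_append (HalfL_elev huhalf)
        (by rw [count_true_elev, count_false_elev]; omega),
      areaAL_elev huhalf hubal, hucount]

lemma areaBL_nil : areaBL 0 [] = 0 := by
  rw [areaBL, Finset.card_eq_zero]
  refine Finset.eq_empty_of_forall_notMem fun q hq => ?_
  obtain ⟨h1, h2, h3, h4⟩ := mem_cellsB.1 hq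
  obtain ⟨k, hk, he, hn⟩ := h4
  simp only [cN_nil] at hn
  omega

lemma Stf0 : Stf 0 = {[]} := by
  ext l
  simp only [Stf, Finset.mem_filter, mem_allW, Finset.mem_singleton, List.length_eq_zero_iff]
  constructor
  · rintro ⟨h1, -⟩
    exact h1
  · rintro rfl
    refine ⟨rfl, fun k hk1 hk2 => ?_⟩
    simp at hk2
    omega

lemma Sp0 : Sp 0 = 1 := by
  rw [Sp, Stf0, Finset.sum_singleton, areaBL_nil, pow_zero]


lemma sum_reindex (n : ℕ) (F : ℕ → ℕ → Polynomial ℤ) :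
    ∑ a ∈ Finset.range n, ∑ b ∈ Finset.range (n - a), F a b
      = ∑ k ∈ Finset.range n, ∑ b ∈ Finset.range (n - k), F (n - 1 - k - b) b := by
  have hs1 : ∑ x ∈ (Finset.range n).sigma (fun a => Finset.range (n - a)), F x.1 x.2
      = ∑ a ∈ Finset.range n, ∑ b ∈ Finset.range (n - a), F a b := Finset.sum_sigma _ _ _
  have hs2 : ∑ x ∈ (Finset.range n).sigma (fun a => Finset.range (n - a)),
        F (n - 1 - x.1 - x.2) x.2
      = ∑ k ∈ Finset.range n, ∑ b ∈ Finset.range (n - k), F (n - 1 - k - b) b :=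
    Finset.sum_sigma _ _ _
  rw [← hs1, ← hs2]
  apply Finset.sum_nbij' (i := fun x => ⟨n - 1 - x.1 - x.2, x.2⟩)
    (j := fun x => ⟨n - 1 - x.1 - x.2, x.2⟩)
  · rintro ⟨a, b⟩ hx
    obtain ⟨h1, h2⟩ := Finset.mem_sigma.1 hx
    dsimp only at h1 h2 ⊢
    rw [Finset.mem_range] at h1 h2
    exact Finset.mem_sigma.2 ⟨Finset.mem_range.2 (by show n - 1 - a - b < n; omega),
      Finset.mem_range.2 (by show b < n - (n - 1 - a - b); omega)⟩
  · rintro ⟨a, b⟩ hx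
    obtain ⟨h1, h2⟩ := Finset.mem_sigma.1 hx
    dsimp only at h1 h2 ⊢
    rw [Finset.mem_range] at h1 h2
    exact Finset.mem_sigma.2 ⟨Finset.mem_range.2 (by show n - 1 - a - b < n; omega),
      Finset.mem_range.2 (by show b < n - (n - 1 - a - b); omega)⟩
  · rintro ⟨a, b⟩ hx
    obtain ⟨h1, h2⟩ := Finset.mem_sigma.1 hx
    dsimp only at h1 h2 ⊢
    rw [Finset.mem_range] at h1 h2
    have h3 : n - 1 - (n - 1 - a - b) - b = a := by omega
    simp [h3]
  · rintro ⟨a, b⟩ hx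
    obtain ⟨h1, h2⟩ := Finset.mem_sigma.1 hx
    dsimp only at h1 h2 ⊢
    rw [Finset.mem_range] at h1 h2
    have h3 : n - 1 - (n - 1 - a - b) - b = a := by omega
    simp [h3]
  · rintro ⟨a, b⟩ hx
    obtain ⟨h1, h2⟩ := Finset.mem_sigma.1 hx
    dsimp only at h1 h2 ⊢
    rw [Finset.mem_range] at h1 h2
    have h3 : n - 1 - (n - 1 - a - b) - b = a := by omega
    rw [h3]

lemma main_list (n : ℕ) (hn : 1 ≤ n) :
    Chp (2 * n) = Cp n + ∑ k ∈ Finset.range n,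
      Polynomial.X ^ (2 * k + 1) * Chp (2 * k) * Cp (n - k) := by
  have h1 : Chp (2 * n) = ∑ a ∈ Finset.range (n + 1), Cp a * Sp (2 * n - 2 * a) := by
    have h := Chp_eq (2 * n)
    rw [show 2 * n / 2 + 1 = n + 1 by omega] at h
    exact h
  rw [h1, Finset.sum_range_succ, show 2 * n - 2 * n = 0 by omega, Sp0, mul_one, add_comm]
  congr 1
  have h2 : ∀ a ∈ Finset.range n, Cp a * Sp (2 * n - 2 * a)
      = ∑ b ∈ Finset.range (n - a), Cp a * (Polynomial.X ^ (n - a) *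
          (Cp b * (Polynomial.X ^ (n - a - b - 1) * Chp (2 * (n - a - b - 1))))) := by
    intro a ha
    rw [Finset.mem_range] at ha
    rw [Sp_eq (2 * n - 2 * a) (by omega), show (2 * n - 2 * a) / 2 = n - a by omega]
    rw [Chp_eq (2 * n - 2 * a - 1), show (2 * n - 2 * a - 1) / 2 + 1 = n - a by omega]
    rw [Finset.mul_sum, Finset.mul_sum]
    refine Finset.sum_congr rfl fun b hb => ?_
    rw [Finset.mem_range] at hb
    rw [Sp_eq (2 * n - 2 * a - 1 - 2 * b) (by omega),
      show (2 * n - 2 * a - 1 - 2 * b) / 2 = n - a - b - 1 by omega,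
      show 2 * n - 2 * a - 1 - 2 * b - 1 = 2 * (n - a - b - 1) by omega]
  rw [Finset.sum_congr rfl h2]
  rw [sum_reindex n (fun a b => Cp a * (Polynomial.X ^ (n - a) *
      (Cp b * (Polynomial.X ^ (n - a - b - 1) * Chp (2 * (n - a - b - 1))))))]
  symm
  refine Finset.sum_congr rfl fun k hk => ?_
  rw [Finset.mem_range] at hk
  rw [Cp_eq (n - k) (by omega), Finset.mul_sum]
  refine Finset.sum_congr rfl fun b hb => ?_
  rw [Finset.mem_range] at hb
  have e1 : n - (n - 1 - k - b) = k + b + 1 := by omega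
  have e2 : n - (n - 1 - k - b) - b - 1 = k := by omega
  rw [e2, e1, show n - k - 1 - b = n - 1 - k - b by omega]
  ring


/-- For every `n ≥ 1`,
`Cat_{B_n}(q) = Cat_n(q) + ∑_{k=0}^{n-1} q^{2k+1} Cat_{B_k}(q) Cat_{n-k}(q)`. -/
theorem catB_recurrence (n : ℕ) (hn : 1 ≤ n) :
    CatB n = CatA n + ∑ k ∈ Finset.range n,
      Polynomial.X ^ (2 * k + 1) * CatB k * CatA (n - k) := by
  rw [CatB_eq, CatA_eq]
  have h : ∀ k ∈ Finset.range n,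
      Polynomial.X ^ (2 * k + 1) * CatB k * CatA (n - k)
        = Polynomial.X ^ (2 * k + 1) * Chp (2 * k) * Cp (n - k) := by
    intro k _
    rw [CatB_eq, CatA_eq]
  rw [Finset.sum_congr rfl h]
  exact main_list n hn

end Stmt
end

section
/- In the ring of formal power series in the variable x with coefficients in the field ℚ(q) of rational functions, Σ_{n≥0} Cat_{B_n}(q) · x^n · q^{−n(n−1)} · (1 − qx) / Π_{j=0}^{2n} (1 + x q^{−j}) = 1, where Cat_{B_n}(q) = Σ_w q^{area(w)} is the area generating polynomial over all Dyck paths w of type B_n (with Cat_{B_0}(q) = 1). -/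
open scoped Classical

namespace Stmt

/-- Area generating polynomial of type `B_n` Dyck paths, as an element of the
field `ℚ(q)` of rational functions. -/
noncomputable def CatBq (n : ℕ) : RatFunc ℚ :=
  ∑ w ∈ Finset.univ.filter (fun w : Fin (2 * n) → Bool => IsDyckB n w),
    RatFunc.X ^ areaB n w

/-- The `n`-th summand
`Cat_{B_n}(q) ⬝ x^n ⬝ q^{-n(n-1)} ⬝ (1 - qx) / ∏_{j=0}^{2n} (1 + x q^{-j})`
of the generating function identity, as a formal power series in `x` over `ℚ(q)`. -/
noncomputable def termB (n : ℕ) : PowerSeries (RatFunc ℚ) :=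
  PowerSeries.C (R := RatFunc ℚ) (CatBq n * (RatFunc.X ^ (n * (n - 1)))⁻¹) *
    PowerSeries.X ^ n *
    (1 - PowerSeries.C (R := RatFunc ℚ) RatFunc.X * PowerSeries.X) *
    (∏ j ∈ Finset.range (2 * n + 1),
        (1 + PowerSeries.C (R := RatFunc ℚ) ((RatFunc.X ^ j)⁻¹) * PowerSeries.X))⁻¹


section Counting

variable {m : ℕ} (w : Fin m → Bool)

/-- generic count of steps with value `b` among first `k`. -/
def countAux (b : Bool) (k : ℕ) : ℕ :=
  (Finset.univ.filter (fun t : Fin m => (t : ℕ) < k ∧ w t = b)).card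

lemma countE_eq_aux : countE w = countAux w false := rfl
lemma countN_eq_aux : countN w = countAux w true := rfl

lemma countAux_zero (b : Bool) : countAux w b 0 = 0 := by
  simp [countAux]

lemma countAux_mono (b : Bool) {k k' : ℕ} (h : k ≤ k') : countAux w b k ≤ countAux w b k' := by
  apply Finset.card_le_card
  intro t ht
  simp only [Finset.mem_filter] at *
  exact ⟨ht.1, lt_of_lt_of_le ht.2.1 h, ht.2.2⟩

lemma countAux_stab (b : Bool) {k : ℕ} (h : m ≤ k) : countAux w b k = countAux w b m := by
  unfold countAux
  congr 1
  apply Finset.filter_congr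
  intro t _
  simp only [eq_iff_iff, and_congr_left_iff]
  intro _
  exact ⟨fun _ => t.isLt, fun ht => lt_of_lt_of_le ht h⟩

lemma card_filter_lt {k : ℕ} (h : k ≤ m) :
    (Finset.univ.filter (fun t : Fin m => (t : ℕ) < k)).card = k := by
  conv_rhs => rw [← Finset.card_range k]
  refine Finset.card_bij (fun t _ => (t : ℕ)) ?_ ?_ ?_
  · intro t ht
    simp only [Finset.mem_filter] at ht
    simpa using ht.2
  · intro a _ b _ hab
    exact Fin.val_injective hab
  · intro a ha
    simp only [Finset.mem_range] at ha
    exact ⟨⟨a, lt_of_lt_of_le ha h⟩, by simpa using ha, rfl⟩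

lemma count_sum {k : ℕ} (h : k ≤ m) : countE w k + countN w k = k := by
  rw [countE_eq_aux, countN_eq_aux]
  unfold countAux
  have hdisj : Disjoint
      (Finset.univ.filter (fun t : Fin m => (t : ℕ) < k ∧ w t = false))
      (Finset.univ.filter (fun t : Fin m => (t : ℕ) < k ∧ w t = true)) := by
    rw [Finset.disjoint_filter]
    rintro t _ ⟨_, ht⟩ ⟨_, ht'⟩
    rw [ht] at ht'
    exact Bool.false_ne_true ht'
  rw [← Finset.card_union_of_disjoint hdisj]
  have hun : (Finset.univ.filter (fun t : Fin m => (t : ℕ) < k ∧ w t = false)) ∪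
      (Finset.univ.filter (fun t : Fin m => (t : ℕ) < k ∧ w t = true)) =
      Finset.univ.filter (fun t : Fin m => (t : ℕ) < k) := by
    ext t
    simp only [Finset.mem_union, Finset.mem_filter, Finset.mem_univ, true_and]
    cases hw : w t <;> simp [hw] <;> tauto
  rw [hun, card_filter_lt h]

lemma countAux_succ_of_lt (b : Bool) {k : ℕ} (h : k < m) :
    countAux w b (k + 1) = countAux w b k + (if w ⟨k, h⟩ = b then 1 else 0) := by
  unfold countAux
  split_ifs with hw
  · have hmem : (⟨k, h⟩ : Fin m) ∉
        Finset.univ.filter (fun t : Fin m => (t : ℕ) < k ∧ w t = b) := by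
      simp only [Finset.mem_filter]
      rintro ⟨_, ht, _⟩
      exact lt_irrefl _ ht
    have hins : (Finset.univ.filter (fun t : Fin m => (t : ℕ) < k + 1 ∧ w t = b)) =
        insert (⟨k, h⟩ : Fin m)
          (Finset.univ.filter (fun t : Fin m => (t : ℕ) < k ∧ w t = b)) := by
      ext t
      simp only [Finset.mem_insert, Finset.mem_filter, Finset.mem_univ, true_and]
      constructor
      · rintro ⟨ht, htw⟩
        rcases Nat.lt_succ_iff_lt_or_eq.1 ht with h' | h'
        · exact Or.inr ⟨h', htw⟩
        · exact Or.inl (Fin.ext h')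
      · rintro (rfl | ⟨ht, htw⟩)
        · exact ⟨Nat.lt_succ_self _, hw⟩
        · exact ⟨Nat.lt_succ_of_lt ht, htw⟩
    rw [hins, Finset.card_insert_of_notMem hmem, Nat.add_comm]
  · have : (Finset.univ.filter (fun t : Fin m => (t : ℕ) < k + 1 ∧ w t = b)) =
        (Finset.univ.filter (fun t : Fin m => (t : ℕ) < k ∧ w t = b)) := by
      ext t
      simp only [Finset.mem_filter, Finset.mem_univ, true_and, and_congr_left_iff]
      intro htw
      constructor
      · intro ht
        rcases Nat.lt_succ_iff_lt_or_eq.1 ht with h' | h'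
        · exact h'
        · exfalso; apply hw; rw [← htw]; congr 1; exact (Fin.ext h').symm
      · exact Nat.lt_succ_of_lt
    rw [this, Nat.add_zero]

lemma countE_succ_of_lt {k : ℕ} (h : k < m) :
    countE w (k + 1) = countE w k + (if w ⟨k, h⟩ = false then 1 else 0) := by
  rw [countE_eq_aux]; exact countAux_succ_of_lt w false h

lemma countN_succ_of_lt {k : ℕ} (h : k < m) :
    countN w (k + 1) = countN w k + (if w ⟨k, h⟩ = true then 1 else 0) := by
  rw [countN_eq_aux]; exact countAux_succ_of_lt w true h

lemma countE_mono {k k' : ℕ} (h : k ≤ k') : countE w k ≤ countE w k' := by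
  rw [countE_eq_aux]; exact countAux_mono w false h

lemma countN_mono {k k' : ℕ} (h : k ≤ k') : countN w k ≤ countN w k' := by
  rw [countN_eq_aux]; exact countAux_mono w true h

lemma countE_stab {k : ℕ} (h : m ≤ k) : countE w k = countE w m := by
  rw [countE_eq_aux]; exact countAux_stab w false h

lemma countN_stab {k : ℕ} (h : m ≤ k) : countN w k = countN w m := by
  rw [countN_eq_aux]; exact countAux_stab w true h

lemma countE_succ_east {t : Fin m} (ht : w t = false) :
    countE w ((t : ℕ) + 1) = countE w (t : ℕ) + 1 := by
  rw [countE_succ_of_lt w t.isLt]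
  simp [ht]

lemma countN_succ_east {t : Fin m} (ht : w t = false) :
    countN w ((t : ℕ) + 1) = countN w (t : ℕ) := by
  rw [countN_succ_of_lt w t.isLt]
  simp [ht]

end Counting


section Path

variable {n : ℕ} (w : Fin (2 * n) → Bool)

lemma isDyckB_iff :
    IsDyckB n w ↔ ∀ t : Fin (2 * n), w t = false → 2 * countE w (t : ℕ) < (t : ℕ) := by
  constructor
  · intro hw t ht
    have h1 : countE w ((t : ℕ) + 1) = countE w (t : ℕ) + 1 := countE_succ_east w ht
    have h2 : countN w ((t : ℕ) + 1) = countN w (t : ℕ) := countN_succ_east w ht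
    have h3 := hw ((t : ℕ) + 1)
    have h4 : countE w (t : ℕ) + countN w (t : ℕ) = (t : ℕ) :=
      count_sum w (le_of_lt t.isLt)
    omega
  · intro H
    intro k
    induction k with
    | zero => simp [countE_eq_aux, countN_eq_aux, countAux_zero]
    | succ k ih =>
      by_cases hk : k < 2 * n
      · rw [countE_succ_of_lt w hk, countN_succ_of_lt w hk]
        cases hwk : w ⟨k, hk⟩ with
        | false =>
          have := H ⟨k, hk⟩ hwk
          have h4 : countE w k + countN w k = k := count_sum w (le_of_lt hk)
          simp only [Fin.val_mk] at this
          simp only [reduceIte]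
          omega
        | true =>
          simp only [reduceCtorEq, reduceIte]
          omega
      · push_neg at hk
        rw [countE_stab w (by omega), countN_stab w (by omega)]
        rw [countE_stab w hk, countN_stab w hk] at ih
        exact ih

/-- highest `y`-coordinate attained while the `x`-coordinate is `< i`. -/
noncomputable def Ypath (i : ℕ) : ℕ :=
  ((Finset.range (2 * n + 1)).filter (fun k => countE w k < i)).sup (countN w)

lemma Ypath_nonempty {i : ℕ} (hi : 1 ≤ i) :
    ((Finset.range (2 * n + 1)).filter (fun k => countE w k < i)).Nonempty := by
  refine ⟨0, ?_⟩
  simp only [Finset.mem_filter, Finset.mem_range]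
  constructor
  · omega
  · rw [countE_eq_aux, countAux_zero]; omega

lemma le_Ypath {i k : ℕ} (hk : k ≤ 2 * n) (h : countE w k < i) : countN w k ≤ Ypath w i :=
  Finset.le_sup (by simp only [Finset.mem_filter, Finset.mem_range]; exact ⟨by omega, h⟩)

lemma Ypath_le {i : ℕ} : Ypath w i ≤ countN w (2 * n) := by
  apply Finset.sup_le
  intro k hk
  simp only [Finset.mem_filter, Finset.mem_range] at hk
  exact countN_mono w (by omega)

lemma cellBelow_iff_s1 {i j : ℕ} (hi : 1 ≤ i) : CellBelow w i j ↔ j ≤ Ypath w i := by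
  constructor
  · rintro ⟨k, hk1, hk2⟩
    by_cases hk : k ≤ 2 * n
    · exact le_trans hk2 (le_Ypath w hk hk1)
    · push_neg at hk
      rw [countE_stab w (by omega)] at hk1
      rw [countN_stab w (by omega)] at hk2
      exact le_trans hk2 (le_Ypath w (le_refl _) hk1)
  · intro hj
    obtain ⟨k, hk, hYk⟩ := Finset.exists_mem_eq_sup _ (Ypath_nonempty w hi) (countN w)
    simp only [Finset.mem_filter, Finset.mem_range] at hk
    have hYk' : Ypath w i = countN w k := hYk
    exact ⟨k, hk.2, by rw [hYk'] at hj; exact hj⟩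

lemma Ypath_east {t : Fin (2 * n)} (ht : w t = false) :
    Ypath w (countE w (t : ℕ) + 1) = countN w (t : ℕ) := by
  apply le_antisymm
  · apply Finset.sup_le
    intro k hk
    simp only [Finset.mem_filter, Finset.mem_range] at hk
    have hkt : k ≤ (t : ℕ) := by
      by_contra hc
      push_neg at hc
      have h1 : countE w ((t : ℕ) + 1) ≤ countE w k := countE_mono w hc
      have h2 : countE w ((t : ℕ) + 1) = countE w (t : ℕ) + 1 := countE_succ_east w ht
      omega
    exact countN_mono w hkt
  · exact le_Ypath w (by have := t.isLt; omega) (by omega)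

lemma exists_east_step (hw : IsDyckB n w) {i : ℕ} (hi : 1 ≤ i)
    (hie : i ≤ countE w (2 * n)) :
    ∃ t : Fin (2 * n), w t = false ∧ countE w (t : ℕ) + 1 = i := by
  suffices H : ∀ k, i ≤ countE w k → ∃ t : Fin (2 * n), w t = false ∧ countE w (t : ℕ) + 1 = i by
    exact H (2 * n) hie
  intro k
  induction k with
  | zero => rw [countE_eq_aux, countAux_zero]; omega
  | succ k ih =>
    intro hik
    by_cases h1 : i ≤ countE w k
    · exact ih h1
    · push_neg at h1
      by_cases hk : k < 2 * n
      · rw [countE_succ_of_lt w hk] at hik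
        by_cases hwk : w ⟨k, hk⟩ = false
        · refine ⟨⟨k, hk⟩, hwk, ?_⟩
          rw [if_pos hwk] at hik
          simp only [Fin.val_mk]
          omega
        · rw [if_neg hwk] at hik
          omega
      · push_neg at hk
        have hst : countE w (k + 1) = countE w (2 * n) := countE_stab w (by omega)
        have hst2 : countE w k = countE w (2 * n) := countE_stab w hk
        omega

lemma areaB_eq_sum :
    areaB n w = ∑ i ∈ Finset.Icc 1 (2 * n), (min (Ypath w i) (2 * n + 1 - i) - i) := by
  classical
  set F : Finset (ℕ × ℕ) :=
    ((Finset.Icc 1 (2 * n)) ×ˢ (Finset.Icc 1 (2 * n))).filter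
      (fun p => p.1 < p.2 ∧ p.2 ≤ 2 * n + 1 - p.1 ∧ CellBelow w p.1 p.2) with hF
  have hset : {p : ℕ × ℕ | 1 ≤ p.1 ∧ p.1 < p.2 ∧ p.2 ≤ 2 * n + 1 - p.1 ∧
      CellBelow w p.1 p.2} = ↑F := by
    ext p
    simp only [hF, Set.mem_setOf_eq, Finset.coe_filter, Finset.mem_product,
      Finset.mem_Icc, Set.mem_setOf_eq]
    constructor
    · rintro ⟨h1, h2, h3, h4⟩
      exact ⟨⟨⟨h1, by omega⟩, ⟨by omega, by omega⟩⟩, h2, h3, h4⟩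
    · rintro ⟨⟨⟨h1, _⟩, _⟩, h2, h3, h4⟩
      exact ⟨h1, h2, h3, h4⟩
  rw [areaB, hset, Set.ncard_coe_finset]
  rw [Finset.card_eq_sum_card_fiberwise (f := Prod.fst) (t := Finset.Icc 1 (2 * n))
    (fun p hp => by
      simp only [hF, Finset.mem_coe, Finset.mem_filter, Finset.mem_product] at hp
      exact hp.1.1)]
  apply Finset.sum_congr rfl
  intro i hi
  simp only [Finset.mem_Icc] at hi
  rw [← Nat.card_Ioc i (min (Ypath w i) (2 * n + 1 - i))]
  apply Finset.card_bij (fun p _ => p.2)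
  · intro p hp
    simp only [hF, Finset.mem_filter, Finset.mem_product, Finset.mem_Icc] at hp
    obtain ⟨⟨-, -⟩, h2, h3, h4⟩ := hp.1
    have hp1 : p.1 = i := hp.2
    rw [hp1] at h2 h3 h4
    rw [cellBelow_iff_s1 w (by omega)] at h4
    simp only [Finset.mem_Ioc]
    exact ⟨h2, le_min h4 h3⟩
  · rintro ⟨a1, a2⟩ ha ⟨b1, b2⟩ hb hab
    simp only [hF, Finset.mem_filter] at ha hb
    have : a1 = i := ha.2
    have : b1 = i := hb.2
    simp_all
  · intro j hj
    simp only [Finset.mem_Ioc, le_min_iff] at hj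
    refine ⟨(i, j), ?_, rfl⟩
    simp only [hF, Finset.mem_filter, Finset.mem_product, Finset.mem_Icc]
    have hcb : CellBelow w i j := by
      rw [cellBelow_iff_s1 w (by omega)]
      exact hj.2.1
    have h22 := hj.2.2
    refine ⟨⟨⟨⟨hi.1, hi.2⟩, by omega, by omega⟩, hj.1, by omega, hcb⟩, trivial⟩

lemma sum_odd (N : ℕ) : ∑ j ∈ Finset.range N, (2 * j + 1) = N ^ 2 := by
  induction N with
  | zero => simp
  | succ N ih =>
    rw [Finset.sum_range_succ, ih]
    ring

lemma sum_staircase (N : ℕ) : ∑ i ∈ Finset.Icc 1 (2 * N), (2 * N + 1 - 2 * i) = N ^ 2 := by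
  rw [← sum_odd N]
  rw [← Finset.sum_subset (Finset.Icc_subset_Icc_right (by omega : N ≤ 2 * N))
    (fun i hi hni => by
      simp only [Finset.mem_Icc] at hi hni
      omega)]
  apply Finset.sum_nbij' (i := fun i => N - i) (j := fun j => N - j)
  · intro i hi
    simp only [Finset.mem_Icc] at hi
    simp only [Finset.mem_range]
    omega
  · intro j hj
    simp only [Finset.mem_range] at hj
    simp only [Finset.mem_Icc]
    omega
  · intro i hi
    simp only [Finset.mem_Icc] at hi
    omega
  · intro j hj
    simp only [Finset.mem_range] at hj
    omega
  · intro i hi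
    simp only [Finset.mem_Icc] at hi
    omega

/-- The key area formula: `area(w) + ∑_{east steps t} (2n - t) = n²`. -/
lemma areaB_add_east (hw : IsDyckB n w) :
    areaB n w + ∑ t ∈ Finset.univ.filter (fun t : Fin (2 * n) => w t = false),
      (2 * n - (t : ℕ)) = n ^ 2 := by
  classical
  set e := countE w (2 * n) with he
  have hcountN : countN w (2 * n) = 2 * n - e := by
    have := count_sum w (le_refl (2 * n))
    omega
  have hen : e ≤ n := by
    have h1 := hw (2 * n)
    rw [← he, hcountN] at h1
    omega
  have key : ∀ i ∈ Finset.Icc 1 (2 * n),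
      (min (Ypath w i) (2 * n + 1 - i) - i) +
        (if i ≤ e then (2 * n + 1 - i) - Ypath w i else 0) = 2 * n + 1 - 2 * i := by
    intro i hi
    simp only [Finset.mem_Icc] at hi
    by_cases hie : i ≤ e
    · obtain ⟨t, htw, hti⟩ := exists_east_step w hw hi.1 (by omega)
      have hY : Ypath w i = countN w (t : ℕ) := by
        rw [← hti]; exact Ypath_east w htw
      have hYub : Ypath w i ≤ 2 * n - e := by
        rw [← hcountN]; exact Ypath_le w
      have hYlb : i ≤ Ypath w i := by
        have h1 : countE w ((t : ℕ) + 1) = countE w (t : ℕ) + 1 := countE_succ_east w htw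
        have h2 : countN w ((t : ℕ) + 1) = countN w (t : ℕ) := countN_succ_east w htw
        have h3 := hw ((t : ℕ) + 1)
        omega
      have hmin : min (Ypath w i) (2 * n + 1 - i) = Ypath w i := by
        apply min_eq_left
        omega
      rw [if_pos hie, hmin]
      omega
    · have hY : Ypath w i = 2 * n - e := by
        apply le_antisymm
        · rw [← hcountN]; exact Ypath_le w
        · rw [← hcountN]
          exact le_Ypath w (le_refl _) (by omega)
      rw [if_neg hie, hY]
      omega
  have hsum := Finset.sum_congr rfl key
  rw [Finset.sum_add_distrib, sum_staircase] at hsum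
  rw [areaB_eq_sum]
  have heast : ∑ i ∈ Finset.Icc 1 (2 * n), (if i ≤ e then (2 * n + 1 - i) - Ypath w i else 0) =
      ∑ t ∈ Finset.univ.filter (fun t : Fin (2 * n) => w t = false), (2 * n - (t : ℕ)) := by
    rw [← Finset.sum_subset (Finset.Icc_subset_Icc_right (by omega : e ≤ 2 * n))
      (fun i hi hni => by
        simp only [Finset.mem_Icc] at hi hni
        rw [if_neg (by omega)])]
    rw [Finset.sum_ite_of_true (fun i hi => by simp only [Finset.mem_Icc] at hi; exact hi.2)]
    symm
    refine Finset.sum_bij (fun (t : Fin (2 * n)) (_ : t ∈ Finset.univ.filter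
      (fun t : Fin (2 * n) => w t = false)) => countE w (t : ℕ) + 1) ?_ ?_ ?_ ?_
    · intro t ht
      simp only [Finset.mem_filter] at ht
      have h1 : countE w ((t : ℕ) + 1) = countE w (t : ℕ) + 1 := countE_succ_east w ht.2
      have h2 : countE w ((t : ℕ) + 1) ≤ e := countE_mono w (by have := t.isLt; omega)
      simp only [Finset.mem_Icc]
      omega
    · intro a ha b hb hab
      simp only [Finset.mem_filter] at ha hb
      have hab' : countE w (a : ℕ) + 1 = countE w (b : ℕ) + 1 := hab
      have hinj : countE w (a : ℕ) = countE w (b : ℕ) := by omega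
      rcases lt_trichotomy (a : ℕ) (b : ℕ) with h | h | h
      · exfalso
        have h1 : countE w ((a : ℕ) + 1) = countE w (a : ℕ) + 1 := countE_succ_east w ha.2
        have h2 : countE w ((a : ℕ) + 1) ≤ countE w (b : ℕ) := countE_mono w (by omega)
        omega
      · exact Fin.ext h
      · exfalso
        have h1 : countE w ((b : ℕ) + 1) = countE w (b : ℕ) + 1 := countE_succ_east w hb.2
        have h2 : countE w ((b : ℕ) + 1) ≤ countE w (a : ℕ) := countE_mono w (by omega)
        omega
    · intro i hi
      simp only [Finset.mem_Icc] at hi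
      obtain ⟨t, htw, hti⟩ := exists_east_step w hw hi.1 (by omega)
      exact ⟨t, by simp only [Finset.mem_filter]; exact ⟨Finset.mem_univ _, htw⟩, hti⟩
    · intro t ht
      simp only [Finset.mem_filter] at ht
      have hY : Ypath w (countE w (t : ℕ) + 1) = countN w (t : ℕ) := Ypath_east w ht.2
      have hsum2 : countE w (t : ℕ) + countN w (t : ℕ) = (t : ℕ) :=
        count_sum w (le_of_lt t.isLt)
      have htlt := t.isLt
      show (2 * n - (t : ℕ)) =
        2 * n + 1 - (countE w (t : ℕ) + 1) - Ypath w (countE w (t : ℕ) + 1)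
      rw [hY]
      omega
  rw [heast] at hsum
  exact hsum

end Path


section Subsets

/-- Admissibility: every element `a` of `S`, with `r` elements of `S` being `≥ a`,
satisfies `a + 2r ≤ 2m+1`. -/
def Adm (m : ℕ) (S : Finset ℕ) : Prop :=
  ∀ a ∈ S, a + 2 * (S.filter (fun b => a ≤ b)).card ≤ 2 * m + 1

/-- `V(K, m) = ∑_S q^{-Σ S}` over admissible subsets of `{1, …, K}`. -/
noncomputable def Vq (K m : ℕ) : RatFunc ℚ :=
  ∑ S ∈ (Finset.Icc 1 K).powerset.filter (Adm m),
    ((RatFunc.X : RatFunc ℚ) ^ (∑ a ∈ S, a))⁻¹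

lemma adm_insert_iff {K m : ℕ} (hm : K + 3 ≤ 2 * m + 1) {T : Finset ℕ}
    (hT : T ⊆ Finset.Icc 1 K) :
    Adm m (insert (K + 1) T) ↔ Adm (m - 1) T := by
  have hnm : (K + 1) ∉ T := fun h => by have := (Finset.mem_Icc.1 (hT h)).2; omega
  constructor
  · intro H a ha
    have haK : a ≤ K := (Finset.mem_Icc.1 (hT ha)).2
    have h1 := H a (Finset.mem_insert_of_mem ha)
    have hfil : (insert (K + 1) T).filter (fun b => a ≤ b) =
        insert (K + 1) (T.filter (fun b => a ≤ b)) := by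
      ext b
      simp only [Finset.mem_filter, Finset.mem_insert]
      constructor
      · rintro ⟨rfl | hb, hab⟩
        · exact Or.inl rfl
        · exact Or.inr ⟨hb, hab⟩
      · rintro (rfl | ⟨hb, hab⟩)
        · exact ⟨Or.inl rfl, by omega⟩
        · exact ⟨Or.inr hb, hab⟩
    rw [hfil, Finset.card_insert_of_notMem
      (fun hc => hnm (Finset.mem_of_mem_filter _ hc))] at h1
    omega
  · intro H a ha
    rcases Finset.mem_insert.1 ha with rfl | haT
    · have hfil : (insert (K + 1) T).filter (fun b => (K + 1) ≤ b) = {K + 1} := by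
        ext b
        simp only [Finset.mem_filter, Finset.mem_insert, Finset.mem_singleton]
        constructor
        · rintro ⟨rfl | hb, hab⟩
          · rfl
          · exfalso
            have := (Finset.mem_Icc.1 (hT hb)).2
            omega
        · rintro rfl
          exact ⟨Or.inl rfl, le_refl _⟩
      rw [hfil, Finset.card_singleton]
      omega
    · have haK : a ≤ K := (Finset.mem_Icc.1 (hT haT)).2
      have h1 := H a haT
      have hfil : (insert (K + 1) T).filter (fun b => a ≤ b) =
          insert (K + 1) (T.filter (fun b => a ≤ b)) := by
        ext b
        simp only [Finset.mem_filter, Finset.mem_insert]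
        constructor
        · rintro ⟨rfl | hb, hab⟩
          · exact Or.inl rfl
          · exact Or.inr ⟨hb, hab⟩
        · rintro (rfl | ⟨hb, hab⟩)
          · exact ⟨Or.inl rfl, by omega⟩
          · exact ⟨Or.inr hb, hab⟩
      rw [hfil, Finset.card_insert_of_notMem
        (fun hc => hnm (Finset.mem_of_mem_filter _ hc))]
      omega

lemma Vq_succ (K m : ℕ) :
    Vq (K + 1) m = Vq K m + (if K + 3 ≤ 2 * m + 1 then
      ((RatFunc.X : RatFunc ℚ) ^ (K + 1))⁻¹ * Vq K (m - 1) else 0) := by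
  classical
  unfold Vq
  rw [← Finset.sum_filter_add_sum_filter_not
    ((Finset.Icc 1 (K + 1)).powerset.filter (Adm m)) (fun S => (K + 1) ∈ S)]
  rw [add_comm]
  congr 1
  · apply Finset.sum_congr
    · ext S
      simp only [Finset.mem_filter, Finset.mem_powerset]
      constructor
      · rintro ⟨⟨hsub, hadm⟩, hnot⟩
        refine ⟨fun a ha => ?_, hadm⟩
        have := Finset.mem_Icc.1 (hsub ha)
        have : a ≠ K + 1 := fun h => hnot (h ▸ ha)
        simp only [Finset.mem_Icc]
        omega
      · rintro ⟨hsub, hadm⟩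
        refine ⟨⟨fun a ha => ?_, hadm⟩, fun hc => ?_⟩
        · have := Finset.mem_Icc.1 (hsub ha)
          simp only [Finset.mem_Icc]
          omega
        · have := (Finset.mem_Icc.1 (hsub hc)).2
          omega
    · intro S _
      rfl
  · split_ifs with hcond
    · rw [Finset.mul_sum]
      apply Finset.sum_nbij' (i := fun S => S.erase (K + 1)) (j := fun T => insert (K + 1) T)
      · intro S hS
        simp only [Finset.mem_filter, Finset.mem_powerset] at hS ⊢
        obtain ⟨⟨hsub, hadm⟩, hmem⟩ := hS
        have herase : S.erase (K + 1) ⊆ Finset.Icc 1 K := by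
          intro a ha
          have h1 := Finset.mem_of_mem_erase ha
          have h2 := Finset.ne_of_mem_erase ha
          have := Finset.mem_Icc.1 (hsub h1)
          simp only [Finset.mem_Icc]
          omega
        refine ⟨herase, ?_⟩
        rw [← adm_insert_iff hcond herase, Finset.insert_erase hmem]
        exact hadm
      · intro T hT
        simp only [Finset.mem_filter, Finset.mem_powerset] at hT ⊢
        obtain ⟨hsub, hadm⟩ := hT
        refine ⟨⟨?_, ?_⟩, Finset.mem_insert_self _ _⟩
        · intro a ha
          rcases Finset.mem_insert.1 ha with rfl | haT
          · simp only [Finset.mem_Icc]; omega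
          · have := Finset.mem_Icc.1 (hsub haT)
            simp only [Finset.mem_Icc]
            omega
        · rw [adm_insert_iff hcond hsub]
          exact hadm
      · intro S hS
        simp only [Finset.mem_filter] at hS
        exact Finset.insert_erase hS.2
      · intro T hT
        simp only [Finset.mem_filter, Finset.mem_powerset] at hT
        have hnm : (K + 1) ∉ T := fun h => by
          have := (Finset.mem_Icc.1 (hT.1 h)).2; omega
        exact Finset.erase_insert hnm
      · intro S hS
        simp only [Finset.mem_filter, Finset.mem_powerset] at hS
        obtain ⟨⟨hsub, _⟩, hmem⟩ := hS
        have hsplit : ∑ a ∈ S, a = (K + 1) + ∑ a ∈ S.erase (K + 1), a :=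
          (Finset.add_sum_erase _ _ hmem).symm
        rw [hsplit, pow_add, mul_inv]
    · convert Finset.sum_empty
      rw [Finset.filter_eq_empty_iff]
      rintro S hS hmem
      simp only [Finset.mem_filter, Finset.mem_powerset] at hS
      have h1 := hS.2 (K + 1) hmem
      have h2 : 1 ≤ (S.filter (fun b => (K + 1) ≤ b)).card := by
        apply Finset.card_pos.2
        exact ⟨K + 1, Finset.mem_filter.2 ⟨hmem, le_refl _⟩⟩
      omega

/-- The east-step encoding of a path as a subset. -/
noncomputable def pathSet {n : ℕ} (w : Fin (2 * n) → Bool) : Finset ℕ :=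
  (Finset.univ.filter (fun t : Fin (2 * n) => w t = false)).image
    (fun t : Fin (2 * n) => 2 * n - (t : ℕ))

lemma pathSet_injOn {n : ℕ} (w : Fin (2 * n) → Bool) :
    Set.InjOn (fun t : Fin (2 * n) => 2 * n - (t : ℕ))
      ↑(Finset.univ.filter (fun t : Fin (2 * n) => w t = false)) := by
  intro a _ b _ hab
  have ha := a.isLt
  have hb := b.isLt
  simp only at hab
  exact Fin.ext (by omega)

lemma pathSet_sum {n : ℕ} (w : Fin (2 * n) → Bool) :
    ∑ a ∈ pathSet w, a =
      ∑ t ∈ Finset.univ.filter (fun t : Fin (2 * n) => w t = false), (2 * n - (t : ℕ)) := by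
  rw [pathSet, Finset.sum_image]
  intro a ha b hb hab
  exact pathSet_injOn w ha hb hab

lemma pathSet_subset {n : ℕ} (w : Fin (2 * n) → Bool) :
    pathSet w ⊆ Finset.Icc 1 (2 * n) := by
  intro a ha
  simp only [pathSet, Finset.mem_image, Finset.mem_filter] at ha
  obtain ⟨t, _, rfl⟩ := ha
  have := t.isLt
  simp only [Finset.mem_Icc]
  omega

lemma pathSet_rank {n : ℕ} (w : Fin (2 * n) → Bool) {t : Fin (2 * n)} (ht : w t = false) :
    ((pathSet w).filter (fun b => (2 * n - (t : ℕ)) ≤ b)).card = countE w (t : ℕ) + 1 := by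
  rw [pathSet, Finset.filter_image]
  rw [Finset.card_image_of_injOn (fun a ha b hb hab =>
    pathSet_injOn w (Finset.mem_coe.2 (Finset.mem_of_mem_filter _ ha))
      (Finset.mem_coe.2 (Finset.mem_of_mem_filter _ hb)) hab)]
  have htlt := t.isLt
  have hset : ((Finset.univ.filter (fun s : Fin (2 * n) => w s = false)).filter
      (fun s : Fin (2 * n) => (2 * n - (t : ℕ)) ≤ 2 * n - (s : ℕ))) =
      Finset.univ.filter (fun s : Fin (2 * n) => (s : ℕ) < (t : ℕ) + 1 ∧ w s = false) := by
    ext s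
    have hslt := s.isLt
    simp only [Finset.mem_filter, Finset.mem_univ, true_and]
    constructor
    · rintro ⟨hws, hle⟩
      exact ⟨by omega, hws⟩
    · rintro ⟨hlt, hws⟩
      exact ⟨hws, by omega⟩
  rw [hset]
  show countE w ((t : ℕ) + 1) = countE w (t : ℕ) + 1
  exact countE_succ_east w ht

lemma pathSet_adm_iff {n : ℕ} (w : Fin (2 * n) → Bool) :
    Adm n (pathSet w) ↔ IsDyckB n w := by
  rw [isDyckB_iff]
  constructor
  · intro H t ht
    have htlt := t.isLt
    have h1 := H (2 * n - (t : ℕ)) (by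
      simp only [pathSet, Finset.mem_image, Finset.mem_filter]
      exact ⟨t, by simp [ht], rfl⟩)
    rw [pathSet_rank w ht] at h1
    omega
  · intro H a ha
    simp only [pathSet, Finset.mem_image, Finset.mem_filter] at ha
    obtain ⟨t, ⟨_, ht⟩, rfl⟩ := ha
    have htlt := t.isLt
    rw [pathSet_rank w ht]
    have := H t ht
    omega

lemma catBq_eq (n : ℕ) :
    CatBq n = (RatFunc.X : RatFunc ℚ) ^ (n ^ 2) * Vq (2 * n) n := by
  classical
  rw [Vq, Finset.mul_sum, CatBq]
  apply Finset.sum_bij (i := fun w _ => pathSet w)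
  · intro w hw
    simp only [Finset.mem_filter] at hw
    simp only [Finset.mem_filter, Finset.mem_powerset]
    exact ⟨pathSet_subset w, (pathSet_adm_iff w).2 hw.2⟩
  · intro w hw w' hw' heq
    have hsets : Finset.univ.filter (fun t : Fin (2 * n) => w t = false) =
        Finset.univ.filter (fun t : Fin (2 * n) => w' t = false) := by
      have hinj : Function.Injective (fun t : Fin (2 * n) => 2 * n - (t : ℕ)) := by
        intro a b hab
        have := a.isLt
        have := b.isLt
        simp only at hab
        exact Fin.ext (by omega)
      exact Finset.image_injective hinj heq
    funext t
    have := Finset.ext_iff.1 hsets t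
    simp only [Finset.mem_filter, Finset.mem_univ, true_and] at this
    cases h : w t with
    | false => exact (this.1 h).symm
    | true =>
      cases h' : w' t with
      | false => exact absurd (this.2 h') (by simp [h])
      | true => rfl
  · intro S hS
    simp only [Finset.mem_filter, Finset.mem_powerset] at hS
    obtain ⟨hsub, hadm⟩ := hS
    set w : Fin (2 * n) → Bool :=
      fun t : Fin (2 * n) => if (2 * n - (t : ℕ)) ∈ S then false else true with hwdef
    have hps : pathSet w = S := by
      ext a
      simp only [pathSet, Finset.mem_image, Finset.mem_filter, Finset.mem_univ, true_and]
      constructor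
      · rintro ⟨t, ht, rfl⟩
        by_cases hmem : (2 * n - (t : ℕ)) ∈ S
        · exact hmem
        · rw [hwdef] at ht
          simp only [if_neg hmem] at ht
          exact absurd ht (by simp)
      · intro ha
        have haIcc := Finset.mem_Icc.1 (hsub ha)
        refine ⟨⟨2 * n - a, by omega⟩, ?_, by simp only [Fin.val_mk]; omega⟩
        rw [hwdef]
        simp only [Fin.val_mk]
        rw [if_pos (by rw [show 2 * n - (2 * n - a) = a by omega]; exact ha)]
    have hadm' : Adm n (pathSet w) := by rw [hps]; exact hadm
    refine ⟨w, ?_, hps⟩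
    simp only [Finset.mem_filter, Finset.mem_univ, true_and]
    exact (pathSet_adm_iff w).1 hadm'
  · intro w hw
    simp only [Finset.mem_filter] at hw
    have harea := areaB_add_east w hw.2
    rw [pathSet_sum]
    set s := ∑ t ∈ Finset.univ.filter (fun t : Fin (2 * n) => w t = false), (2 * n - (t : ℕ))
    have hXs : (RatFunc.X : RatFunc ℚ) ^ s ≠ 0 := pow_ne_zero _ RatFunc.X_ne_zero
    rw [show n ^ 2 = areaB n w + s from harea.symm, pow_add]
    field_simp

end Subsets


section Series

local notation "Xq" => (RatFunc.X : RatFunc ℚ)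
local notation "PS" => PowerSeries (RatFunc ℚ)
local notation "CC" => PowerSeries.C (R := RatFunc ℚ)

lemma Xq_ne_zero : Xq ≠ 0 := RatFunc.X_ne_zero

lemma Vq_zero (m : ℕ) : Vq 0 m = 1 := by
  unfold Vq
  rw [show Finset.Icc 1 0 = ∅ from Finset.Icc_eq_empty (by omega)]
  rw [Finset.powerset_empty, Finset.filter_singleton]
  rw [if_pos (show Adm m ∅ from fun a ha => absurd ha (Finset.notMem_empty a))]
  simp

lemma catBq_zero : CatBq 0 = 1 := by
  have h := catBq_eq 0
  rw [Vq_zero] at h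
  simpa using h

/-- the product `∏_{j=0}^{2N}(1 + q^{-j} x)`. -/
noncomputable def Pprod (N : ℕ) : PS :=
  ∏ j ∈ Finset.range (2 * N + 1),
    (1 + PowerSeries.C (R := RatFunc ℚ) ((RatFunc.X ^ j)⁻¹) * PowerSeries.X)

/-- the tail series `Ψ_N = ∑_{m ≥ N+1} q^m V(2N+1, m) x^m`. -/
noncomputable def Psi (N : ℕ) : PS :=
  PowerSeries.mk (fun m => if N + 1 ≤ m then Xq ^ m * Vq (2 * N + 1) m else 0)

lemma constantCoeff_Pprod (N : ℕ) :
    PowerSeries.constantCoeff (R := RatFunc ℚ) (Pprod N) = 1 := by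
  rw [Pprod, map_prod]
  apply Finset.prod_eq_one
  intro j _
  simp

lemma Pprod_ne_zero (N : ℕ) : Pprod N ≠ 0 := by
  intro h
  have := constantCoeff_Pprod N
  rw [h, map_zero] at this
  exact zero_ne_one this

lemma Pprod_inv_mul (N : ℕ) : (Pprod N)⁻¹ * Pprod N = 1 :=
  PowerSeries.inv_mul_cancel _ (by rw [constantCoeff_Pprod]; exact one_ne_zero)

lemma termB_eq (n : ℕ) :
    termB n = PowerSeries.C (R := RatFunc ℚ) (CatBq n * (RatFunc.X ^ (n * (n - 1)))⁻¹) *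
      PowerSeries.X ^ n *
      (1 - PowerSeries.C (R := RatFunc ℚ) RatFunc.X * PowerSeries.X) * (Pprod n)⁻¹ := rfl

lemma key_m1 (N : ℕ) :
    Xq ^ (N + 1) * Vq (2 * N + 1) (N + 1) =
      CatBq (N + 1) * (Xq ^ ((N + 1) * N))⁻¹ := by
  have h1 : Vq (2 * N + 1 + 1) (N + 1) = Vq (2 * N + 1) (N + 1) := by
    rw [Vq_succ, if_neg (by omega), add_zero]
  have h2 : 2 * (N + 1) = 2 * N + 1 + 1 := by omega
  have h3 := catBq_eq (N + 1)
  rw [h2, h1] at h3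
  rw [h3]
  have hsq : (N + 1) ^ 2 = (N + 1) * N + (N + 1) := by ring
  rw [hsq, pow_add]
  have hXa : (Xq ^ ((N + 1) * N)) ≠ 0 := pow_ne_zero _ Xq_ne_zero
  field_simp
  ring

lemma key_m2 (N : ℕ) :
    Xq ^ (N + 2) * Vq (2 * N + 1) (N + 2) +
      ((Xq ^ (2 * N + 1))⁻¹ + (Xq ^ (2 * N + 2))⁻¹) *
        (Xq ^ (N + 1) * Vq (2 * N + 1) (N + 1)) =
      Xq ^ (N + 2) * Vq (2 * N + 3) (N + 2) := by
  have e1 : (2 : ℕ) * N + 3 = 2 * N + 2 + 1 := by omega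
  have e2 : (2 : ℕ) * N + 2 = 2 * N + 1 + 1 := by omega
  have h1 : Vq (2 * N + 2 + 1) (N + 2) = Vq (2 * N + 2) (N + 2) +
      (Xq ^ (2 * N + 3))⁻¹ * Vq (2 * N + 2) (N + 1) := by
    rw [Vq_succ, if_pos (by omega)]
    norm_num
  have h2 : Vq (2 * N + 1 + 1) (N + 2) = Vq (2 * N + 1) (N + 2) +
      (Xq ^ (2 * N + 2))⁻¹ * Vq (2 * N + 1) (N + 1) := by
    rw [Vq_succ, if_pos (by omega)]
    norm_num
  have h3 : Vq (2 * N + 1 + 1) (N + 1) = Vq (2 * N + 1) (N + 1) := by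
    rw [Vq_succ, if_neg (by omega), add_zero]
  rw [e1, h1, ← e2, e2, h2, h3, ← e2]
  have hX : Xq ≠ 0 := Xq_ne_zero
  field_simp
  ring

lemma key_m3 (N M : ℕ) :
    Xq ^ (N + 3 + M) * Vq (2 * N + 1) (N + 3 + M) +
      ((Xq ^ (2 * N + 1))⁻¹ + (Xq ^ (2 * N + 2))⁻¹) *
        (Xq ^ (N + 2 + M) * Vq (2 * N + 1) (N + 2 + M)) +
      ((Xq ^ (2 * N + 1))⁻¹ * (Xq ^ (2 * N + 2))⁻¹) *
        (Xq ^ (N + 1 + M) * Vq (2 * N + 1) (N + 1 + M)) =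
      Xq ^ (N + 3 + M) * Vq (2 * N + 3) (N + 3 + M) := by
  have e1 : (2 : ℕ) * N + 3 = 2 * N + 2 + 1 := by omega
  have e2 : (2 : ℕ) * N + 2 = 2 * N + 1 + 1 := by omega
  have h1 : Vq (2 * N + 2 + 1) (N + 3 + M) = Vq (2 * N + 2) (N + 3 + M) +
      (Xq ^ (2 * N + 3))⁻¹ * Vq (2 * N + 2) (N + 2 + M) := by
    rw [Vq_succ, if_pos (by omega), show (N + 3 + M - 1 : ℕ) = N + 2 + M by omega]
  have h2 : Vq (2 * N + 1 + 1) (N + 3 + M) = Vq (2 * N + 1) (N + 3 + M) +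
      (Xq ^ (2 * N + 2))⁻¹ * Vq (2 * N + 1) (N + 2 + M) := by
    rw [Vq_succ, if_pos (by omega), show (N + 3 + M - 1 : ℕ) = N + 2 + M by omega]
  have h3 : Vq (2 * N + 1 + 1) (N + 2 + M) = Vq (2 * N + 1) (N + 2 + M) +
      (Xq ^ (2 * N + 2))⁻¹ * Vq (2 * N + 1) (N + 1 + M) := by
    rw [Vq_succ, if_pos (by omega), show (N + 2 + M - 1 : ℕ) = N + 1 + M by omega]
  rw [e1, h1, ← e2, e2, h2, h3, ← e2]
  have hX : Xq ≠ 0 := Xq_ne_zero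
  field_simp
  ring

/-- The key telescoping identity. -/
lemma keyid (N : ℕ) :
    Psi N * ((1 + CC ((Xq ^ (2 * N + 1))⁻¹) * PowerSeries.X) *
        (1 + CC ((Xq ^ (2 * N + 2))⁻¹) * PowerSeries.X)) =
      Psi (N + 1) + CC (CatBq (N + 1) * (Xq ^ ((N + 1) * N))⁻¹) * PowerSeries.X ^ (N + 1) := by
  have hexp : Psi N * ((1 + CC ((Xq ^ (2 * N + 1))⁻¹) * PowerSeries.X) *
      (1 + CC ((Xq ^ (2 * N + 2))⁻¹) * PowerSeries.X)) =
      Psi N + CC ((Xq ^ (2 * N + 1))⁻¹) * (PowerSeries.X ^ 1 * Psi N) +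
        CC ((Xq ^ (2 * N + 2))⁻¹) * (PowerSeries.X ^ 1 * Psi N) +
        CC ((Xq ^ (2 * N + 1))⁻¹) * (CC ((Xq ^ (2 * N + 2))⁻¹) *
          (PowerSeries.X ^ 2 * Psi N)) := by
    ring
  rw [hexp]
  ext m
  simp only [map_add, PowerSeries.coeff_C_mul, PowerSeries.coeff_X_pow_mul',
    Psi, PowerSeries.coeff_mk, PowerSeries.coeff_X_pow]
  by_cases hm0 : m ≤ N
  · split_ifs <;> first | omega | (exfalso; assumption) | ring
  by_cases hm1 : m = N + 1
  · subst hm1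
    rw [show (N + 1 - 1 : ℕ) = N from rfl]
    split_ifs <;> first | omega | (exfalso; assumption) | linear_combination key_m1 N
  by_cases hm2 : m = N + 2
  · subst hm2
    rw [show (N + 2 - 1 : ℕ) = N + 1 from rfl, show (N + 2 - 2 : ℕ) = N from rfl,
      show (2 : ℕ) * (N + 1) + 1 = 2 * N + 3 by omega]
    split_ifs <;> first | omega | (exfalso; assumption) | linear_combination key_m2 N
  · obtain ⟨M, rfl⟩ : ∃ M, m = N + 3 + M := ⟨m - (N + 3), by omega⟩
    rw [show (N + 3 + M - 1 : ℕ) = N + 2 + M by omega,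
      show (N + 3 + M - 2 : ℕ) = N + 1 + M by omega,
      show (2 : ℕ) * (N + 1) + 1 = 2 * N + 3 by omega]
    split_ifs <;> first | omega | (exfalso; assumption) | linear_combination key_m3 N M

/-- The master telescoping identity. -/
lemma master (N : ℕ) :
    (1 : PS) - ∑ n ∈ Finset.range (N + 1), termB n =
      (1 - PowerSeries.C (R := RatFunc ℚ) RatFunc.X * PowerSeries.X) * Psi N * (Pprod N)⁻¹ := by
  induction N with
  | zero =>
    rw [Finset.sum_range_one, termB_eq, catBq_zero]
    have h0 : (0 : ℕ) * (0 - 1) = 0 := rfl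
    rw [h0, pow_zero, inv_one, mul_one, map_one, one_mul, pow_zero, one_mul]
    apply mul_right_cancel₀ (Pprod_ne_zero 0)
    rw [sub_mul, one_mul, mul_assoc _ _ (Pprod 0), Pprod_inv_mul, mul_one,
      mul_assoc _ _ (Pprod 0), Pprod_inv_mul, mul_one]
    have hP0 : Pprod 0 = 1 + PowerSeries.X := by
      rw [Pprod, show (2 : ℕ) * 0 + 1 = 1 from rfl, Finset.prod_range_one]
      simp
    rw [hP0]
    ext m
    rw [show ((1 : PS) - PowerSeries.C (R := RatFunc ℚ) RatFunc.X * PowerSeries.X) * Psi 0 =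
      Psi 0 - PowerSeries.C (R := RatFunc ℚ) RatFunc.X * (PowerSeries.X ^ 1 * Psi 0) by ring]
    simp only [map_sub, map_add, PowerSeries.coeff_one, PowerSeries.coeff_C_mul,
      PowerSeries.coeff_X_pow_mul', Psi, PowerSeries.coeff_mk, PowerSeries.coeff_X]
    have hV1 : ∀ m : ℕ, 1 ≤ m → Vq (2 * 0 + 1) m = 1 + (Xq ^ 1)⁻¹ := by
      intro m hm
      rw [show (2 : ℕ) * 0 + 1 = 0 + 1 from rfl, Vq_succ, if_pos (by omega), Vq_zero,
        Vq_zero, mul_one]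
    have hX : Xq ≠ 0 := Xq_ne_zero
    by_cases hm0 : m = 0
    · subst hm0
      split_ifs <;> first | omega | (exfalso; assumption) | ring
    by_cases hm1 : m = 1
    · subst hm1
      rw [hV1 1 (by omega)]
      split_ifs <;> first | omega | (exfalso; assumption) | (field_simp; ring)
    · rw [hV1 m (by omega)]
      obtain ⟨M, rfl⟩ : ∃ M, m = M + 2 := ⟨m - 2, by omega⟩
      rw [show (M + 2 - 1 : ℕ) = M + 1 from rfl]
      rw [hV1 (M + 1) (by omega)]
      split_ifs <;> first | omega | (exfalso; assumption) | (field_simp; ring)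
  | succ N ih =>
    rw [Finset.sum_range_succ, ← sub_sub, ih]
    have hPsplit : Pprod (N + 1) = Pprod N *
        ((1 + CC ((Xq ^ (2 * N + 1))⁻¹) * PowerSeries.X) *
          (1 + CC ((Xq ^ (2 * N + 2))⁻¹) * PowerSeries.X)) := by
      rw [Pprod, Pprod, show (2 : ℕ) * (N + 1) + 1 = (2 * N + 1 + 1) + 1 by omega,
        Finset.prod_range_succ, Finset.prod_range_succ]
      rw [show (2 : ℕ) * N + 1 + 1 = 2 * N + 2 by omega]
      ring
    apply mul_right_cancel₀ (Pprod_ne_zero (N + 1))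
    rw [sub_mul]
    have hT : termB (N + 1) * Pprod (N + 1) =
        CC (CatBq (N + 1) * (Xq ^ ((N + 1) * N))⁻¹) * PowerSeries.X ^ (N + 1) *
          (1 - PowerSeries.C (R := RatFunc ℚ) RatFunc.X * PowerSeries.X) := by
      rw [termB_eq, show (N + 1) * (N + 1 - 1) = (N + 1) * N from rfl]
      rw [mul_assoc, Pprod_inv_mul, mul_one]
    rw [hT]
    have hL : (1 - PowerSeries.C (R := RatFunc ℚ) RatFunc.X * PowerSeries.X) * Psi N *
        (Pprod N)⁻¹ * Pprod (N + 1) =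
        (1 - PowerSeries.C (R := RatFunc ℚ) RatFunc.X * PowerSeries.X) *
          (Psi N * ((1 + CC ((Xq ^ (2 * N + 1))⁻¹) * PowerSeries.X) *
            (1 + CC ((Xq ^ (2 * N + 2))⁻¹) * PowerSeries.X))) := by
      rw [hPsplit]
      rw [show (1 - PowerSeries.C (R := RatFunc ℚ) RatFunc.X * PowerSeries.X) * Psi N *
        (Pprod N)⁻¹ * (Pprod N *
          ((1 + CC ((Xq ^ (2 * N + 1))⁻¹) * PowerSeries.X) *
            (1 + CC ((Xq ^ (2 * N + 2))⁻¹) * PowerSeries.X))) =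
        (1 - PowerSeries.C (R := RatFunc ℚ) RatFunc.X * PowerSeries.X) *
          (Psi N * ((1 + CC ((Xq ^ (2 * N + 1))⁻¹) * PowerSeries.X) *
            (1 + CC ((Xq ^ (2 * N + 2))⁻¹) * PowerSeries.X))) * ((Pprod N)⁻¹ * Pprod N) by ring]
      rw [Pprod_inv_mul, mul_one]
    rw [hL, keyid]
    have hR : (1 - PowerSeries.C (R := RatFunc ℚ) RatFunc.X * PowerSeries.X) * Psi (N + 1) *
        (Pprod (N + 1))⁻¹ * Pprod (N + 1) =
        (1 - PowerSeries.C (R := RatFunc ℚ) RatFunc.X * PowerSeries.X) * Psi (N + 1) := by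
      rw [mul_assoc, Pprod_inv_mul, mul_one]
    rw [hR]
    ring

end Series

/-- `∑_{n ≥ 0} Cat_{B_n}(q) x^n q^{-n(n-1)} (1 - qx) / (-x; q^{-1})_{2n+1} = 1`
in `ℚ(q)[[x]]`: every coefficient of the partial sums stabilizes at the
corresponding coefficient of `1` (the `n`-th summand is divisible by `x^n`). -/
theorem catB_generating_function (d N : ℕ) (hdN : d ≤ N) :
    PowerSeries.coeff (R := RatFunc ℚ) d (∑ n ∈ Finset.range (N + 1), termB n) =
      if d = 0 then 1 else 0 := by
  have hm := master N
  have hS : (∑ n ∈ Finset.range (N + 1), termB n) =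
      1 - (1 - PowerSeries.C (R := RatFunc ℚ) RatFunc.X * PowerSeries.X) * Psi N * (Pprod N)⁻¹ := by
    rw [← hm]; ring
  rw [hS, map_sub, PowerSeries.coeff_one]
  have h1 : (PowerSeries.X : PowerSeries (RatFunc ℚ)) ^ (N + 1) ∣ Psi N := by
    rw [PowerSeries.X_pow_dvd_iff]
    intro m hmN
    rw [Psi, PowerSeries.coeff_mk, if_neg (by omega)]
  have h2 : Psi N ∣ (1 - PowerSeries.C (R := RatFunc ℚ) RatFunc.X * PowerSeries.X) * Psi N *
      (Pprod N)⁻¹ :=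
    ⟨(1 - PowerSeries.C (R := RatFunc ℚ) RatFunc.X * PowerSeries.X) * (Pprod N)⁻¹, by ring⟩
  have hz : PowerSeries.coeff (R := RatFunc ℚ) d
      ((1 - PowerSeries.C (R := RatFunc ℚ) RatFunc.X * PowerSeries.X) * Psi N * (Pprod N)⁻¹) = 0 :=
    PowerSeries.X_pow_dvd_iff.1 (dvd_trans h1 h2) d (by omega)
  rw [hz, sub_zero]

end Stmt
end
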